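/- arXiv:quant-ph/9703004 — 6 statements merged into one kernel-verified Lean document; each statement's English description precedes it below -/
import Mathlib

section
/- Let ρ be a separable state acting on the Hilbert space H = H₁ ⊗ H₂ with dim H = m < ∞. Then there exist N ≤ m² product unit vectors ψ_i ⊗ φ_k (indexed by a finite set I of pairs with #I = N) and probabilities p_{ik} (p_{ik} ≥ 0, Σ p_{ik} = 1) such that ρ = Σ_{(i,k)∈I} p_{ik} P_{ψ_i} ⊗ P_{φ_k}, where P_ψ denotes the orthogonal projection onto the span of ψ. In particular every separable state on a finite-dimensional space is a finite convex combination of pure product states. -/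
open scoped ComplexOrder
open Matrix Kronecker

noncomputable section

/-- A quantum state: a positive semidefinite complex matrix of trace 1. -/
def IsState {n : Type*} [Fintype n] [DecidableEq n] (ρ : Matrix n n ℂ) : Prop :=
  ρ.PosSemidef ∧ ρ.trace = 1

/-- Separability: membership in the closure of the convex hull of Kronecker
products of states. -/
def IsSepState {m₁ m₂ : ℕ}
    (ρ : Matrix (Fin m₁ × Fin m₂) (Fin m₁ × Fin m₂) ℂ) : Prop :=
  ρ ∈ closure (convexHull ℝ
    {σ : Matrix (Fin m₁ × Fin m₂) (Fin m₁ × Fin m₂) ℂ |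
      ∃ (A : Matrix (Fin m₁) (Fin m₁) ℂ) (B : Matrix (Fin m₂) (Fin m₂) ℂ),
        IsState A ∧ IsState B ∧ σ = A ⊗ₖ B})

/-- The rank-one operator `|ψ⟩⟨ψ|` (orthogonal projection on `span ψ` for unit `ψ`). -/
def proj {n : Type*} (ψ : n → ℂ) : Matrix n n ℂ :=
  fun i j => ψ i * star (ψ j)

/-- The tensor (Kronecker) product of two vectors. -/
def tens {m₁ m₂ : ℕ} (ψ : Fin m₁ → ℂ) (φ : Fin m₂ → ℂ) :
    Fin m₁ × Fin m₂ → ℂ := fun p => ψ p.1 * φ p.2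

/-- Partial transposition on the second factor. -/
def pt₂ {m₁ m₂ : ℕ} (ρ : Matrix (Fin m₁ × Fin m₂) (Fin m₁ × Fin m₂) ℂ) :
    Matrix (Fin m₁ × Fin m₂) (Fin m₁ × Fin m₂) ℂ :=
  fun p q => ρ (p.1, q.2) (q.1, p.2)

/-! ### Auxiliary lemmas -/

section Aux

lemma trace_proj {k : ℕ} (ψ : Fin k → ℂ) (h : ∑ j, ‖ψ j‖ ^ 2 = 1) : (proj ψ).trace = 1 := by
  have : (proj ψ).trace = ∑ j, ((‖ψ j‖ ^ 2 : ℝ) : ℂ) := by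
    simp [Matrix.trace, Matrix.diag, proj, Complex.star_def, Complex.mul_conj',
      Complex.mul_conj, Complex.normSq_eq_norm_sq]
  rw [this, ← Complex.ofReal_sum, h, Complex.ofReal_one]

lemma coe_smul_mat (r : ℝ) {n : Type*} [Fintype n] (X : Matrix n n ℂ) : (r : ℂ) • X = r • X := by
  ext i j
  simp [Matrix.smul_apply, Complex.real_smul]

lemma state_decomp {k : ℕ} {A : Matrix (Fin k) (Fin k) ℂ} (hA : IsState A) :
    ∃ (v : Fin k → Fin k → ℂ) (lam : Fin k → ℝ),
      (∀ i, ∑ j, ‖v i j‖ ^ 2 = 1) ∧ (∀ i, 0 ≤ lam i) ∧ (∑ i, lam i) = 1 ∧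
      A = ∑ i, lam i • proj (v i) := by
  obtain ⟨hpsd, htr⟩ := hA
  have hH : A.IsHermitian := hpsd.1
  set U : Matrix (Fin k) (Fin k) ℂ := (hH.eigenvectorUnitary : Matrix (Fin k) (Fin k) ℂ) with hU
  have hUU : star U * U = 1 := Matrix.mem_unitaryGroup_iff'.mp (hH.eigenvectorUnitary).2
  have hsp : A = U * diagonal (RCLike.ofReal ∘ hH.eigenvalues) * star U := by
    have h := hH.spectral_theorem; rwa [Unitary.conjStarAlgAut_apply] at h
  have htrd : A.trace = ∑ i, (hH.eigenvalues i : ℂ) := by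
    calc A.trace = (U * diagonal (RCLike.ofReal ∘ hH.eigenvalues) * star U).trace := by
          rw [← hsp]
      _ = (star U * (U * diagonal (RCLike.ofReal ∘ hH.eigenvalues))).trace :=
          (Matrix.trace_mul_comm _ _)
      _ = (diagonal (RCLike.ofReal ∘ hH.eigenvalues)).trace := by
          rw [← mul_assoc, hUU, one_mul]
      _ = ∑ i, (hH.eigenvalues i : ℂ) := by simp [Matrix.trace_diagonal]
  refine ⟨fun i j => U j i, hH.eigenvalues, ?_, hpsd.eigenvalues_nonneg, ?_, ?_⟩
  · intro i
    have h1 : ∑ j, star (U j i) * U j i = 1 := by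
      have : (star U * U) i i = (1 : Matrix (Fin k) (Fin k) ℂ) i i := by rw [hUU]
      simpa [Matrix.mul_apply, Matrix.star_apply, Matrix.one_apply] using this
    have h2 : ∑ j, star (U j i) * U j i = ((∑ j, ‖U j i‖ ^ 2 : ℝ) : ℂ) := by
      push_cast
      refine Finset.sum_congr rfl fun j _ => ?_
      rw [Complex.star_def, mul_comm, Complex.mul_conj, Complex.normSq_eq_norm_sq]
      simp
    rw [h2] at h1
    exact_mod_cast h1
  · have : ((∑ i, hH.eigenvalues i : ℝ) : ℂ) = 1 := by
      push_cast; rw [← htrd, htr]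
    exact_mod_cast this
  · ext a b
    have hab := congrFun (congrFun hsp a) b
    rw [hab, Matrix.sum_apply]
    simp only [Matrix.smul_apply, proj, Complex.real_smul]
    rw [Matrix.mul_apply]
    refine Finset.sum_congr rfl fun i _ => ?_
    rw [Matrix.mul_diagonal]
    simp [hU, Matrix.star_apply]
    ring

/-- Hermitian matrices as a real submodule. -/
def hermSubmodule (n : Type*) [Fintype n] : Submodule ℝ (Matrix n n ℂ) where
  carrier := {M | M.IsHermitian}
  add_mem' := fun h1 h2 => h1.add h2
  zero_mem' := Matrix.isHermitian_zero
  smul_mem' := by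
    intro c M h
    show (c • M).IsHermitian
    unfold Matrix.IsHermitian at *
    rw [Matrix.conjTranspose_smul, h]
    norm_num

/-- Real-linear "real/imaginary parts" map used to bound the dimension of the space of
Hermitian matrices. -/
def reImMap {n : Type*} [Fintype n] (key : n → ℕ) : Matrix n n ℂ →ₗ[ℝ] (n × n → ℝ) where
  toFun M := fun q => if key q.1 ≤ key q.2 then (M q.1 q.2).re else (M q.1 q.2).im
  map_add' := by
    intro M N; funext q; by_cases h : key q.1 ≤ key q.2 <;> simp [h]
  map_smul' := by
    intro c M; funext q; by_cases h : key q.1 ≤ key q.2 <;>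
      simp [h, Complex.smul_re, Complex.smul_im]

lemma reImMap_inj {n : Type*} [Fintype n] {key : n → ℕ} (hkey : Function.Injective key)
    {M : Matrix n n ℂ} (hM : M.IsHermitian) (h0 : reImMap key M = 0) : M = 0 := by
  have hsym : ∀ a b : n, M b a = star (M a b) := by
    intro a b
    conv_lhs => rw [← hM]
    rfl
  have hz : ∀ q : n × n, (if key q.1 ≤ key q.2 then (M q.1 q.2).re else (M q.1 q.2).im) = 0 :=
    fun q => congrFun h0 q
  ext i j
  show M i j = 0
  rcases eq_or_ne i j with rfl | hij
  · have hre : (M i i).re = 0 := by simpa [le_refl] using hz (i, i)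
    have him : (M i i).im = 0 := by
      have := hsym i i
      have h2 : (M i i).im = -(M i i).im := by
        conv_lhs => rw [this]
        simp [Complex.star_def]
      linarith
    exact Complex.ext hre him
  · have hkne : key i ≠ key j := fun h => hij (hkey h)
    rcases le_or_gt (key i) (key j) with h | h
    · have hre : (M i j).re = 0 := by simpa [h] using hz (i, j)
      have hnot : ¬ key j ≤ key i := not_le.mpr (lt_of_le_of_ne h hkne)
      have him' : (M j i).im = 0 := by simpa [hnot] using hz (j, i)
      have him : (M i j).im = 0 := by
        rw [hsym j i]
        simp [Complex.star_def, him']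
      exact Complex.ext hre him
    · have hnot : ¬ key i ≤ key j := not_le.mpr h
      have him : (M i j).im = 0 := by simpa [hnot] using hz (i, j)
      have hre' : (M j i).re = 0 := by simpa [h.le] using hz (j, i)
      have hre : (M i j).re = 0 := by
        rw [hsym j i]
        simp [Complex.star_def, hre']
      exact Complex.ext hre him

lemma finrank_herm_le (n : Type*) [Fintype n] [DecidableEq n] :
    Module.finrank ℝ (hermSubmodule n) ≤ Fintype.card n * Fintype.card n := by
  classical
  set key : n → ℕ := fun i => (Fintype.equivFin n i : ℕ) with hkeydef
  have hkey : Function.Injective key :=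
    fun a b h => (Fintype.equivFin n).injective (Fin.val_injective h)
  have hinj : Function.Injective ((reImMap key).comp (hermSubmodule n).subtype) := by
    rw [← LinearMap.ker_eq_bot, LinearMap.ker_eq_bot']
    rintro ⟨M, hM⟩ hm
    ext1
    exact reImMap_inj hkey hM hm
  have := LinearMap.finrank_le_finrank_of_injective hinj
  rwa [Module.finrank_pi, Fintype.card_prod] at this

lemma sum_pad {β : Type*} [AddCommMonoid β] {N M : ℕ} (h : N ≤ M) (G : Fin N → β) :
    (∑ i : Fin M, if hi : (i : ℕ) < N then G ⟨i, hi⟩ else 0) = ∑ j, G j := by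
  rw [Fin.sum_univ_eq_sum_range (fun t => if ht : t < N then G ⟨t, ht⟩ else 0) M,
    ← Finset.sum_subset (Finset.range_subset_range.mpr h)
      (fun t _ ht => dif_neg (by simpa using ht)),
    ← Fin.sum_univ_eq_sum_range (fun t => if ht : t < N then G ⟨t, ht⟩ else 0) N]
  exact Finset.sum_congr rfl fun j _ => by simp

lemma isCompact_sph (k : ℕ) : IsCompact {ψ : Fin k → ℂ | ∑ j, ‖ψ j‖ ^ 2 = 1} := by
  have hcont : Continuous fun ψ : Fin k → ℂ => ∑ j, ‖ψ j‖ ^ 2 :=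
    continuous_finset_sum _ fun j _ => ((continuous_apply j).norm.pow 2)
  have hclosed : IsClosed {ψ : Fin k → ℂ | ∑ j, ‖ψ j‖ ^ 2 = 1} :=
    isClosed_eq hcont continuous_const
  refine IsCompact.of_isClosed_subset (isCompact_closedBall (0 : Fin k → ℂ) 1) hclosed ?_
  intro ψ hψ
  rw [Metric.mem_closedBall, dist_zero_right]
  rw [pi_norm_le_iff_of_nonneg zero_le_one]
  intro j
  have h1 : ‖ψ j‖ ^ 2 ≤ 1 := by
    rw [← hψ]
    exact Finset.single_le_sum (f := fun i => ‖ψ i‖ ^ 2) (fun i _ => by positivity)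
      (Finset.mem_univ j)
  nlinarith [norm_nonneg (ψ j)]

lemma continuous_combo {m₁ m₂ M : ℕ} :
    Continuous (fun u : (Fin M → ℝ) × (Fin M → Fin m₁ → ℂ) × (Fin M → Fin m₂ → ℂ) =>
      ∑ i, ((u.1 i : ℂ) • (proj (u.2.1 i) ⊗ₖ proj (u.2.2 i)))) := by
  refine continuous_finset_sum _ fun i _ => ?_
  apply continuous_matrix
  intro x y
  show Continuous fun u : (Fin M → ℝ) × (Fin M → Fin m₁ → ℂ) × (Fin M → Fin m₂ → ℂ) =>
    (u.1 i : ℂ) * ((u.2.1 i x.1 * star (u.2.1 i y.1)) * (u.2.2 i x.2 * star (u.2.2 i y.2)))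
  have hp : Continuous fun u : (Fin M → ℝ) × (Fin M → Fin m₁ → ℂ) × (Fin M → Fin m₂ → ℂ) =>
      ((u.1 i : ℝ) : ℂ) := Complex.continuous_ofReal.comp ((continuous_apply i).comp continuous_fst)
  have hψ : ∀ a, Continuous fun u : (Fin M → ℝ) × (Fin M → Fin m₁ → ℂ) × (Fin M → Fin m₂ → ℂ) =>
      u.2.1 i a := fun a =>
    (continuous_apply a).comp ((continuous_apply i).comp (continuous_fst.comp continuous_snd))
  have hφ : ∀ a, Continuous fun u : (Fin M → ℝ) × (Fin M → Fin m₁ → ℂ) × (Fin M → Fin m₂ → ℂ) =>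
      u.2.2 i a := fun a =>
    (continuous_apply a).comp ((continuous_apply i).comp (continuous_snd.comp continuous_snd))
  exact hp.mul (((hψ x.1).mul (hψ y.1).star).mul ((hφ x.2).mul (hφ y.2).star))

/-- The set of pure product states. -/
def pureProd (m₁ m₂ : ℕ) : Set (Matrix (Fin m₁ × Fin m₂) (Fin m₁ × Fin m₂) ℂ) :=
  {σ | ∃ (ψ : Fin m₁ → ℂ) (φ : Fin m₂ → ℂ),
    (∑ j, ‖ψ j‖ ^ 2 = 1) ∧ (∑ j, ‖φ j‖ ^ 2 = 1) ∧ σ = proj ψ ⊗ₖ proj φ}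

lemma pureProd_herm_trace {m₁ m₂ : ℕ} {σ : Matrix (Fin m₁ × Fin m₂) (Fin m₁ × Fin m₂) ℂ}
    (h : σ ∈ pureProd m₁ m₂) : σ.IsHermitian ∧ σ.trace = 1 := by
  obtain ⟨ψ, φ, hψ, hφ, rfl⟩ := h
  constructor
  · ext ⟨a, b⟩ ⟨c, d⟩
    simp [Matrix.conjTranspose_apply, Matrix.kroneckerMap_apply, proj]
    ring
  · rw [Matrix.trace_kronecker, trace_proj ψ hψ, trace_proj φ hφ, one_mul]

lemma prodstate_mem {m₁ m₂ : ℕ} {A : Matrix (Fin m₁) (Fin m₁) ℂ}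
    {B : Matrix (Fin m₂) (Fin m₂) ℂ} (hA : IsState A) (hB : IsState B) :
    A ⊗ₖ B ∈ convexHull ℝ (pureProd m₁ m₂) := by
  obtain ⟨v, lam, hv, hlam0, hlam1, hAeq⟩ := state_decomp hA
  obtain ⟨u, mu, hu, hmu0, hmu1, hBeq⟩ := state_decomp hB
  apply mem_convexHull_of_exists_fintype (ι := Fin m₁ × Fin m₂)
    (w := fun q => lam q.1 * mu q.2) (z := fun q => proj (v q.1) ⊗ₖ proj (u q.2))
  · exact fun q => mul_nonneg (hlam0 _) (hmu0 _)
  · rw [Fintype.sum_prod_type]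
    simp only [← Finset.mul_sum, hmu1, mul_one]
    exact hlam1
  · exact fun q => ⟨v q.1, u q.2, hv _, hu _, rfl⟩
  · rw [hAeq, hBeq]
    ext ⟨a, b⟩ ⟨c, d⟩
    simp only [Matrix.sum_apply, Matrix.smul_apply, Matrix.kroneckerMap_apply,
      Fintype.sum_prod_type]
    rw [Finset.sum_mul_sum]
    refine Finset.sum_congr rfl fun i _ => Finset.sum_congr rfl fun j _ => ?_
    simp only [Matrix.sum_apply, Matrix.smul_apply, Matrix.kroneckerMap_apply, proj,
      Complex.real_smul]
    push_cast
    ring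

/-- The set of convex combinations of exactly `(m₁ m₂)²` pure product states. -/
def comboSet (m₁ m₂ : ℕ) : Set (Matrix (Fin m₁ × Fin m₂) (Fin m₁ × Fin m₂) ℂ) :=
  {x | ∃ (ψ : Fin ((m₁ * m₂) ^ 2) → Fin m₁ → ℂ) (φ : Fin ((m₁ * m₂) ^ 2) → Fin m₂ → ℂ)
      (p : Fin ((m₁ * m₂) ^ 2) → ℝ),
    (∀ i, ∑ j, ‖ψ i j‖ ^ 2 = 1) ∧ (∀ i, ∑ j, ‖φ i j‖ ^ 2 = 1) ∧
    (∀ i, 0 ≤ p i) ∧ (∑ i, p i) = 1 ∧ x = ∑ i, (p i : ℂ) • (proj (ψ i) ⊗ₖ proj (φ i))}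

lemma isClosed_comboSet (m₁ m₂ : ℕ) : IsClosed (comboSet m₁ m₂) := by
  set M := (m₁ * m₂) ^ 2
  have himg : comboSet m₁ m₂ =
      (fun u : (Fin M → ℝ) × (Fin M → Fin m₁ → ℂ) × (Fin M → Fin m₂ → ℂ) =>
        ∑ i, ((u.1 i : ℂ) • (proj (u.2.1 i) ⊗ₖ proj (u.2.2 i)))) ''
      ((stdSimplex ℝ (Fin M)) ×ˢ
        ((Set.univ.pi fun _ : Fin M => {ψ : Fin m₁ → ℂ | ∑ j, ‖ψ j‖ ^ 2 = 1}) ×ˢ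
         (Set.univ.pi fun _ : Fin M => {φ : Fin m₂ → ℂ | ∑ j, ‖φ j‖ ^ 2 = 1}))) := by
    ext x
    constructor
    · rintro ⟨ψ, φ, p, h1, h2, h3, h4, h5⟩
      exact ⟨(p, ψ, φ), ⟨⟨h3, h4⟩, fun i _ => h1 i, fun i _ => h2 i⟩, h5.symm⟩
    · rintro ⟨⟨p, ψ, φ⟩, ⟨⟨h3, h4⟩, hψ, hφ⟩, rfl⟩
      exact ⟨ψ, φ, p, fun i => hψ i (Set.mem_univ i), fun i => hφ i (Set.mem_univ i),
        h3, h4, rfl⟩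
  rw [himg]
  refine IsCompact.isClosed ?_
  exact ((isCompact_stdSimplex ℝ (Fin M)).prod
    ((isCompact_univ_pi fun _ => isCompact_sph m₁).prod
      (isCompact_univ_pi fun _ => isCompact_sph m₂))).image continuous_combo

lemma hull_subset_combo {m₁ m₂ : ℕ} (h₁ : 0 < m₁) (h₂ : 0 < m₂) :
    convexHull ℝ (pureProd m₁ m₂) ⊆ comboSet m₁ m₂ := by
  classical
  intro x hx
  obtain ⟨ι, hfin, z, w, hrange, haff, hwpos, hwsum, hxeq⟩ :=
    eq_pos_convex_span_of_mem_convexHull hx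
  set H := hermSubmodule (Fin m₁ × Fin m₂) with hHdef
  set ℓ : Matrix (Fin m₁ × Fin m₂) (Fin m₁ × Fin m₂) ℂ →ₗ[ℝ] ℝ :=
    Complex.reLm.comp ((Matrix.traceLinearMap (Fin m₁ × Fin m₂) ℝ ℂ)) with hldef
  set W := H ⊓ LinearMap.ker ℓ with hWdef
  have hWH : W < H := by
    refine lt_of_le_of_ne inf_le_left fun hEq => ?_
    have h1H : (1 : Matrix (Fin m₁ × Fin m₂) (Fin m₁ × Fin m₂) ℂ) ∈ H :=
      Matrix.isHermitian_one
    rw [← hEq] at h1H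
    have hker : ℓ (1 : Matrix (Fin m₁ × Fin m₂) (Fin m₁ × Fin m₂) ℂ) = 0 :=
      (Submodule.mem_inf.mp h1H).2
    have hval : ℓ (1 : Matrix (Fin m₁ × Fin m₂) (Fin m₁ × Fin m₂) ℂ) = ((m₁ * m₂ : ℕ) : ℝ) := by
      simp [hldef, Matrix.trace_one, Fintype.card_prod]
    rw [hval] at hker
    have hpos : (0:ℝ) < ((m₁ * m₂ : ℕ) : ℝ) := by positivity
    exact (ne_of_gt hpos) hker
  have hvs : vectorSpan ℝ (Set.range z) ≤ W := by
    rw [vectorSpan_def, Submodule.span_le]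
    intro v hv
    rw [Set.mem_vsub] at hv
    obtain ⟨x1, hx1, y1, hy1, rfl⟩ := hv
    obtain ⟨i, rfl⟩ := hx1
    obtain ⟨j, rfl⟩ := hy1
    have hzi := pureProd_herm_trace (hrange (Set.mem_range_self i))
    have hzj := pureProd_herm_trace (hrange (Set.mem_range_self j))
    rw [vsub_eq_sub]
    refine Submodule.mem_inf.mpr ⟨hzi.1.sub hzj.1, LinearMap.mem_ker.mpr ?_⟩
    simp [hldef, Matrix.trace_sub, hzi.2, hzj.2]
  have hcard : Fintype.card ι ≤ (m₁ * m₂) ^ 2 := by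
    calc Fintype.card ι ≤ Module.finrank ℝ (vectorSpan ℝ (Set.range z)) + 1 :=
          haff.card_le_finrank_succ
      _ ≤ Module.finrank ℝ W + 1 := Nat.add_le_add_right (Submodule.finrank_mono hvs) 1
      _ ≤ Module.finrank ℝ H := Nat.succ_le_of_lt (Submodule.finrank_lt_finrank_of_lt hWH)
      _ ≤ Fintype.card (Fin m₁ × Fin m₂) * Fintype.card (Fin m₁ × Fin m₂) :=
          finrank_herm_le (Fin m₁ × Fin m₂)
      _ = (m₁ * m₂) ^ 2 := by simp [Fintype.card_prod, sq]
  have hmem : ∀ i : ι, z i ∈ pureProd m₁ m₂ := fun i => hrange (Set.mem_range_self i)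
  choose Ψ Φ hΨ hΦ hzz using hmem
  set N := Fintype.card ι with hNdef
  set e : Fin N ≃ ι := (Fintype.equivFin ι).symm with hedef
  set ψ0 : Fin m₁ → ℂ := fun j => if j = ⟨0, h₁⟩ then 1 else 0 with hψ0def
  set φ0 : Fin m₂ → ℂ := fun j => if j = ⟨0, h₂⟩ then 1 else 0 with hφ0def
  have hψ0 : ∑ j, ‖ψ0 j‖ ^ 2 = 1 := by
    have h1 : ∀ j : Fin m₁, ‖ψ0 j‖ ^ 2 = if j = ⟨0, h₁⟩ then 1 else 0 := by
      intro j; by_cases h : j = ⟨0, h₁⟩ <;> simp [hψ0def, h]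
    rw [Finset.sum_congr rfl fun j _ => h1 j, Finset.sum_ite_eq' Finset.univ]
    simp
  have hφ0 : ∑ j, ‖φ0 j‖ ^ 2 = 1 := by
    have h1 : ∀ j : Fin m₂, ‖φ0 j‖ ^ 2 = if j = ⟨0, h₂⟩ then 1 else 0 := by
      intro j; by_cases h : j = ⟨0, h₂⟩ <;> simp [hφ0def, h]
    rw [Finset.sum_congr rfl fun j _ => h1 j, Finset.sum_ite_eq' Finset.univ]
    simp
  refine ⟨fun i => if hi : (i : ℕ) < N then Ψ (e ⟨i, hi⟩) else ψ0,
    fun i => if hi : (i : ℕ) < N then Φ (e ⟨i, hi⟩) else φ0,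
    fun i => if hi : (i : ℕ) < N then w (e ⟨i, hi⟩) else 0, ?_, ?_, ?_, ?_, ?_⟩
  · intro i
    by_cases hi : (i : ℕ) < N
    · simp only [dif_pos hi]; exact hΨ _
    · simp only [dif_neg hi]; exact hψ0
  · intro i
    by_cases hi : (i : ℕ) < N
    · simp only [dif_pos hi]; exact hΦ _
    · simp only [dif_neg hi]; exact hφ0
  · intro i
    by_cases hi : (i : ℕ) < N
    · simp only [dif_pos hi]; exact (hwpos _).le
    · simp only [dif_neg hi]; exact le_rfl
  · rw [sum_pad hcard (fun j => w (e j))]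
    rw [Equiv.sum_comp e w]
    exact hwsum
  · symm
    calc ∑ i : Fin ((m₁ * m₂) ^ 2),
          ((if hi : (i : ℕ) < N then w (e ⟨i, hi⟩) else 0 : ℝ) : ℂ) •
            (proj (if hi : (i : ℕ) < N then Ψ (e ⟨i, hi⟩) else ψ0) ⊗ₖ
             proj (if hi : (i : ℕ) < N then Φ (e ⟨i, hi⟩) else φ0))
        = ∑ i : Fin ((m₁ * m₂) ^ 2),
            (if hi : (i : ℕ) < N then w (e ⟨i, hi⟩) • z (e ⟨i, hi⟩) else 0) := by
          refine Finset.sum_congr rfl fun i _ => ?_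
          by_cases hi : (i : ℕ) < N
          · simp only [dif_pos hi]
            rw [coe_smul_mat, hzz (e ⟨i, hi⟩)]
          · simp only [dif_neg hi]
            simp
      _ = ∑ j : Fin N, w (e j) • z (e j) := sum_pad hcard (fun j => w (e j) • z (e j))
      _ = ∑ i : ι, w i • z i := Equiv.sum_comp e (fun i => w i • z i)
      _ = x := hxeq

end Aux

theorem separable_finite_decomposition {m₁ m₂ : ℕ}
    (ρ : Matrix (Fin m₁ × Fin m₂) (Fin m₁ × Fin m₂) ℂ)
    (hρ : IsState ρ) (hsep : IsSepState ρ) :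
    ∃ N : ℕ, N ≤ (m₁ * m₂) ^ 2 ∧
      ∃ (ψ : Fin N → Fin m₁ → ℂ) (φ : Fin N → Fin m₂ → ℂ) (p : Fin N → ℝ),
        (∀ i, ∑ j, ‖ψ i j‖ ^ 2 = 1) ∧
        (∀ i, ∑ j, ‖φ i j‖ ^ 2 = 1) ∧
        (∀ i, 0 ≤ p i) ∧ (∑ i, p i) = 1 ∧
        ρ = ∑ i, (p i : ℂ) • (proj (ψ i) ⊗ₖ proj (φ i)) := by
  rcases Nat.eq_zero_or_pos m₁ with hm₁ | hm₁
  · exfalso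
    subst hm₁
    have : ρ.trace = 0 := by simp [Matrix.trace]
    rw [hρ.2] at this
    exact one_ne_zero this
  rcases Nat.eq_zero_or_pos m₂ with hm₂ | hm₂
  · exfalso
    subst hm₂
    have : ρ.trace = 0 := by simp [Matrix.trace]
    rw [hρ.2] at this
    exact one_ne_zero this
  have hsub : {σ : Matrix (Fin m₁ × Fin m₂) (Fin m₁ × Fin m₂) ℂ |
      ∃ (A : Matrix (Fin m₁) (Fin m₁) ℂ) (B : Matrix (Fin m₂) (Fin m₂) ℂ),
        IsState A ∧ IsState B ∧ σ = A ⊗ₖ B} ⊆ convexHull ℝ (pureProd m₁ m₂) := by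
    rintro σ ⟨A, B, hA, hB, rfl⟩
    exact prodstate_mem hA hB
  have hhull : convexHull ℝ {σ : Matrix (Fin m₁ × Fin m₂) (Fin m₁ × Fin m₂) ℂ |
      ∃ (A : Matrix (Fin m₁) (Fin m₁) ℂ) (B : Matrix (Fin m₂) (Fin m₂) ℂ),
        IsState A ∧ IsState B ∧ σ = A ⊗ₖ B} ⊆ comboSet m₁ m₂ :=
    (convexHull_min hsub (convex_convexHull ℝ _)).trans (hull_subset_combo hm₁ hm₂)
  have hρmem : ρ ∈ comboSet m₁ m₂ := by
    have := closure_mono hhull hsep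
    rwa [(isClosed_comboSet m₁ m₂).closure_eq] at this
  obtain ⟨ψ, φ, p, h1, h2, h3, h4, h5⟩ := hρmem
  exact ⟨(m₁ * m₂) ^ 2, le_rfl, ψ, φ, p, h1, h2, h3, h4, h5⟩
end
end

section
/- Let ρ be a separable state on ℂ^{m₁} ⊗ ℂ^{m₂}. Then there exists a finite set of product vectors ψ_i ⊗ φ_k such that the vectors ψ_i ⊗ φ_k span the range of ρ and the partially conjugated vectors ψ_i ⊗ φ_k* span the range of ρ^{T₂}; in particular each ψ_i ⊗ φ_k belongs to the range of ρ and each ψ_i ⊗ φ_k* belongs to the range of ρ^{T₂}. (Range criterion for separability.) -/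
open scoped ComplexOrder
open Matrix Kronecker

noncomputable section

/-! ### Auxiliary lemmas -/

/-- The range of a sum of rank-one projections is the span of the vectors. -/
lemma range_sum_proj {n ι : Type*} [Fintype n] [DecidableEq n] [Fintype ι]
    (y : ι → n → ℂ) :
    LinearMap.range (∑ i, proj (y i)).mulVecLin = Submodule.span ℂ (Set.range y) := by
  classical
  set M : Matrix n ι ℂ := Matrix.of fun j i => y i j with hM
  have h1 : (∑ i, proj (y i)) = M * Mᴴ := by
    ext j k
    simp [Matrix.sum_apply, proj, Matrix.mul_apply, Matrix.conjTranspose_apply, hM]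
  have h2 : Set.range M.col = Set.range y := rfl
  have hle : LinearMap.range (M * Mᴴ).mulVecLin ≤ LinearMap.range M.mulVecLin := by
    rw [Matrix.mulVecLin_mul]
    exact LinearMap.range_comp_le_range _ _
  have hrank : (M * Mᴴ).rank = M.rank := Matrix.rank_self_mul_conjTranspose M
  have := Submodule.eq_of_le_of_finrank_le hle (le_of_eq hrank.symm)
  rw [h1, this, Matrix.range_mulVecLin, h2]

/-- Entrywise spectral decomposition of a Hermitian matrix. -/
lemma spectral_entry {n : Type*} [Fintype n] [DecidableEq n] {A : Matrix n n ℂ}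
    (hA : A.IsHermitian) (a b : n) :
    A a b = ∑ k, (hA.eigenvalues k : ℂ) *
      ((hA.eigenvectorUnitary : Matrix n n ℂ) a k *
       star ((hA.eigenvectorUnitary : Matrix n n ℂ) b k)) := by
  conv_lhs => rw [hA.spectral_theorem, Unitary.conjStarAlgAut_apply]
  rw [Matrix.mul_apply]
  refine Finset.sum_congr rfl fun k _ => ?_
  rw [Matrix.mul_diagonal]
  simp [Matrix.conjTranspose_apply, Matrix.star_eq_conjTranspose]
  ring

/-- A nonnegative multiple of a Kronecker product of positive semidefinite matrices
is a sum of rank-one projections onto product vectors. -/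
lemma smul_kron_decomp {m₁ m₂ : ℕ} (wi : ℝ) (hwi : 0 ≤ wi)
    {A : Matrix (Fin m₁) (Fin m₁) ℂ} {B : Matrix (Fin m₂) (Fin m₂) ℂ}
    (hA : A.PosSemidef) (hB : B.PosSemidef) :
    wi • (A ⊗ₖ B) = ∑ k, ∑ l,
      proj (tens
        (fun x => (Real.sqrt (wi * hA.1.eigenvalues k * hB.1.eigenvalues l) : ℂ) *
          (hA.1.eigenvectorUnitary : Matrix (Fin m₁) (Fin m₁) ℂ) x k)
        (fun y => (hB.1.eigenvectorUnitary : Matrix (Fin m₂) (Fin m₂) ℂ) y l)) := by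
  ext p q
  rw [Matrix.sum_apply]
  simp only [Matrix.sum_apply, Matrix.smul_apply, Matrix.kroneckerMap_apply]
  rw [spectral_entry hA.1 p.1 q.1, spectral_entry hB.1 p.2 q.2, Finset.sum_mul_sum]
  rw [Complex.real_smul, Finset.mul_sum]
  refine Finset.sum_congr rfl fun k _ => ?_
  rw [Finset.mul_sum]
  refine Finset.sum_congr rfl fun l _ => ?_
  simp only [proj, tens]
  have hc : 0 ≤ wi * hA.1.eigenvalues k * hB.1.eigenvalues l :=
    mul_nonneg (mul_nonneg hwi (hA.eigenvalues_nonneg k)) (hB.eigenvalues_nonneg l)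
  have key : ((Real.sqrt (wi * hA.1.eigenvalues k * hB.1.eigenvalues l) : ℝ) : ℂ) *
      ((Real.sqrt (wi * hA.1.eigenvalues k * hB.1.eigenvalues l) : ℝ) : ℂ) =
      (wi : ℂ) * (hA.1.eigenvalues k : ℂ) * (hB.1.eigenvalues l : ℂ) := by
    rw [← Complex.ofReal_mul, Real.mul_self_sqrt hc]
    push_cast
    ring
  simp only [star_mul', Complex.star_def, Complex.conj_ofReal]
  linear_combination
    -((hA.1.eigenvectorUnitary : Matrix (Fin m₁) (Fin m₁) ℂ) p.1 k *
     (starRingEnd ℂ) ((hA.1.eigenvectorUnitary : Matrix (Fin m₁) (Fin m₁) ℂ) q.1 k) *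
     (hB.1.eigenvectorUnitary : Matrix (Fin m₂) (Fin m₂) ℂ) p.2 l *
     (starRingEnd ℂ) ((hB.1.eigenvectorUnitary : Matrix (Fin m₂) (Fin m₂) ℂ) q.2 l)) * key

/-- Partial transposition of a sum of projections onto product vectors. -/
lemma pt2_sum_proj {m₁ m₂ : ℕ} {I : Type*} [Fintype I]
    (Ψ : I → Fin m₁ → ℂ) (Φ : I → Fin m₂ → ℂ) :
    pt₂ (∑ a, proj (tens (Ψ a) (Φ a))) =
      ∑ a, proj (tens (Ψ a) (fun j => star (Φ a j))) := by
  ext p q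
  simp only [pt₂, Matrix.sum_apply, proj, tens]
  refine Finset.sum_congr rfl fun a _ => ?_
  simp only [star_mul', star_star]
  ring

open scoped MatrixOrder in
/-- Entries of a positive semidefinite matrix of trace 1 are bounded by 1. -/
lemma state_entry_bound {n : Type*} [Fintype n] [DecidableEq n] {A : Matrix n n ℂ}
    (hA : A.PosSemidef) (ht : A.trace = 1) (i j : n) : ‖A i j‖ ≤ 1 := by
  classical
  set B := CFC.sqrt A with hBdef
  have hBB : B * B = A := CFC.sqrt_mul_sqrt_self A hA.nonneg
  have hBh : Bᴴ = B := (CFC.sqrt_nonneg A).posSemidef.isHermitian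
  have key : ∀ a b, A a b = ∑ k, star (B k a) * B k b := by
    intro a b
    rw [← hBB, Matrix.mul_apply]
    refine Finset.sum_congr rfl fun k _ => ?_
    rw [show B a k = star (B k a) by rw [← Matrix.conjTranspose_apply, hBh]]
  set f : n → ℝ := fun a => ∑ k, ‖B k a‖ ^ 2 with hf
  have hdiag : ∀ a, A a a = (f a : ℂ) := by
    intro a
    rw [key a a, hf]
    push_cast
    refine Finset.sum_congr rfl fun k _ => ?_
    rw [Complex.star_def, Complex.conj_mul']
  have hsum : ∑ a, f a = 1 := by
    have : A.trace = ((∑ a, f a : ℝ) : ℂ) := by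
      rw [Matrix.trace]
      push_cast
      exact Finset.sum_congr rfl fun a _ => hdiag a
    rw [ht] at this
    exact_mod_cast this.symm
  have hfle : ∀ a, f a ≤ 1 := by
    intro a
    rw [← hsum]
    exact Finset.single_le_sum (f := f)
      (fun b _ => Finset.sum_nonneg fun k _ => sq_nonneg _) (Finset.mem_univ a)
  calc ‖A i j‖ ≤ ∑ k, ‖star (B k i) * B k j‖ := by
        rw [key i j]; exact norm_sum_le _ _
    _ ≤ ∑ k, (‖B k i‖ ^ 2 + ‖B k j‖ ^ 2) / 2 := by
        refine Finset.sum_le_sum fun k _ => ?_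
        rw [norm_mul, norm_star]
        nlinarith [sq_nonneg (‖B k i‖ - ‖B k j‖)]
    _ = (f i + f j) / 2 := by
        rw [hf]
        rw [← Finset.sum_div, ← Finset.sum_add_distrib]
    _ ≤ 1 := by linarith [hfle i, hfle j]

/-- The set of states is compact. -/
lemma isCompact_stateSet {n : Type*} [Fintype n] [DecidableEq n] :
    IsCompact {A : Matrix n n ℂ | A.PosSemidef ∧ A.trace = 1} := by
  classical
  have hK : IsCompact ((Set.univ.pi fun _ : n => Set.univ.pi fun _ : n =>
      Metric.closedBall (0:ℂ) 1 : Set (n → n → ℂ)) : Set (Matrix n n ℂ)) :=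
    isCompact_univ_pi fun _ => isCompact_univ_pi fun _ => isCompact_closedBall _ _
  refine hK.of_isClosed_subset ?_ ?_
  · have h1 : IsClosed {A : Matrix n n ℂ | A.IsHermitian} :=
      isClosed_eq (continuous_id.matrix_conjTranspose) continuous_id
    have h2 : IsClosed {A : Matrix n n ℂ |
        ∀ x : n → ℂ, 0 ≤ dotProduct (star x) (A *ᵥ x)} := by
      rw [show {A : Matrix n n ℂ | ∀ x : n → ℂ, 0 ≤ dotProduct (star x) (A *ᵥ x)}
        = ⋂ x : n → ℂ, {A : Matrix n n ℂ | 0 ≤ dotProduct (star x) (A *ᵥ x)} by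
          ext A; simp]
      refine isClosed_iInter fun x => ?_
      have hcont : Continuous fun A : Matrix n n ℂ => dotProduct (star x) (A *ᵥ x) :=
        Continuous.dotProduct continuous_const
          (continuous_id.matrix_mulVec continuous_const)
      have hcl : IsClosed {z : ℂ | 0 ≤ z} := by
        have : {z : ℂ | 0 ≤ z} = Complex.re ⁻¹' Set.Ici 0 ∩ Complex.im ⁻¹' {0} := by
          ext z
          simp [Complex.le_def, eq_comm]
        rw [this]
        exact (isClosed_Ici.preimage Complex.continuous_re).inter
          (isClosed_singleton.preimage Complex.continuous_im)
      exact hcl.preimage hcont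
    have h3 : IsClosed {A : Matrix n n ℂ | A.trace = 1} :=
      isClosed_eq (continuous_id.matrix_trace) continuous_const
    have : {A : Matrix n n ℂ | A.PosSemidef ∧ A.trace = 1} =
        ({A : Matrix n n ℂ | A.IsHermitian} ∩
         {A : Matrix n n ℂ | ∀ x : n → ℂ, 0 ≤ dotProduct (star x) (A *ᵥ x)}) ∩
        {A : Matrix n n ℂ | A.trace = 1} := by
      ext A
      simp only [Set.mem_setOf_eq, Set.mem_inter_iff]
      exact and_congr_left fun _ => Matrix.posSemidef_iff_dotProduct_mulVec
    rw [this]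
    exact (h1.inter h2).inter h3
  · rintro A ⟨hA, ht⟩
    simp only [Set.mem_pi, Set.mem_univ, forall_true_left, Metric.mem_closedBall,
      dist_zero_right]
    exact fun i j => state_entry_bound hA ht i j

lemma sum_extend_zero {β : Type*} [AddCommMonoid β] {c D : ℕ} (hcD : c ≤ D) (g : Fin c → β) :
    (∑ j : Fin D, if h : (j : ℕ) < c then g ⟨j, h⟩ else 0) = ∑ i : Fin c, g i := by
  rw [Fin.sum_univ_eq_sum_range (fun j => if h : j < c then g ⟨j, h⟩ else 0) D]
  have h2 : ∑ i : Fin c, g i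
      = ∑ j ∈ Finset.range c, if h : j < c then g ⟨j, h⟩ else 0 := by
    rw [← Fin.sum_univ_eq_sum_range (fun j => if h : j < c then g ⟨j, h⟩ else 0) c]
    exact Finset.sum_congr rfl fun i _ => by rw [dif_pos i.isLt]
  rw [h2]
  symm
  refine Finset.sum_subset (Finset.range_subset_range.2 hcD) fun j _ hj => ?_
  rw [Finset.mem_range] at hj
  rw [dif_neg hj]

/-- The convex hull of a compact set in a finite-dimensional real topological
vector space is compact. -/
theorem myIsCompact_convexHull {E : Type*} [AddCommGroup E] [Module ℝ E]
    [TopologicalSpace E] [IsTopologicalAddGroup E] [ContinuousSMul ℝ E]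
    [FiniteDimensional ℝ E] {s : Set E} (hs : IsCompact s) :
    IsCompact (convexHull ℝ s) := by
  classical
  rcases s.eq_empty_or_nonempty with rfl | ⟨x₀, hx₀⟩
  · simp
  set D := Module.finrank ℝ E + 1 with hD
  set f : (Fin D → ℝ) × (Fin D → E) → E := fun p => ∑ i, p.1 i • p.2 i with hfdef
  have hfc : Continuous f := by
    refine continuous_finset_sum _ fun i _ => ?_
    exact ((continuous_apply i).comp continuous_fst).smul
      ((continuous_apply i).comp continuous_snd)
  have hK : IsCompact (stdSimplex ℝ (Fin D) ×ˢ Set.univ.pi fun _ : Fin D => s) :=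
    (isCompact_stdSimplex (𝕜 := ℝ) (ι := Fin D)).prod (isCompact_univ_pi fun _ => hs)
  have himg : convexHull ℝ s
      = f '' (stdSimplex ℝ (Fin D) ×ˢ Set.univ.pi fun _ : Fin D => s) := by
    apply Set.Subset.antisymm
    · intro x hx
      obtain ⟨ι, hι, z, w, hzs, hai, hw0, hw1, hwz⟩ :=
        eq_pos_convex_span_of_mem_convexHull hx
      have hcard : Fintype.card ι ≤ D :=
        hai.card_le_finrank_succ.trans (Nat.add_le_add_right (Submodule.finrank_le _) 1)
      set c := Fintype.card ι with hc
      set e := Fintype.equivFin ι with he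
      set w' : Fin D → ℝ := fun j => if h : (j : ℕ) < c then w (e.symm ⟨j, h⟩) else 0 with hw'
      set z' : Fin D → E := fun j => if h : (j : ℕ) < c then z (e.symm ⟨j, h⟩) else x₀ with hz'
      refine ⟨(w', z'), ⟨⟨fun j => ?_, ?_⟩, fun j _ => ?_⟩, ?_⟩
      · by_cases h : (j : ℕ) < c
        · simp only [hw', dif_pos h]; exact (hw0 _).le
        · simp only [hw', dif_neg h]; exact le_refl 0
      · rw [hw']
        rw [sum_extend_zero hcard (fun i => w (e.symm i))]
        rw [Equiv.sum_comp e.symm w]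
        exact hw1
      · by_cases h : (j : ℕ) < c
        · simp only [hz', dif_pos h]; exact hzs (Set.mem_range_self _)
        · simp only [hz', dif_neg h]; exact hx₀
      · rw [hfdef]
        simp only
        have : ∀ j : Fin D, w' j • z' j =
            if h : (j : ℕ) < c then w (e.symm ⟨j, h⟩) • z (e.symm ⟨j, h⟩) else 0 := by
          intro j
          by_cases h : (j : ℕ) < c
          · simp only [hw', hz', dif_pos h]
          · simp only [hw', hz', dif_neg h, zero_smul]
        rw [Finset.sum_congr rfl fun j _ => this j,
          sum_extend_zero hcard (fun i => w (e.symm i) • z (e.symm i)),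
          Equiv.sum_comp e.symm (fun i => w i • z i)]
        exact hwz
    · rintro x ⟨⟨w, z⟩, ⟨⟨hw0, hw1⟩, hz⟩, rfl⟩
      have := Finset.centerMass_mem_convexHull (t := Finset.univ) (w := w) (z := z)
        (fun i _ => hw0 i) (by rw [hw1]; norm_num)
        (fun i _ => hz i (Set.mem_univ i))
      rwa [Finset.centerMass_eq_of_sum_1 _ _ hw1] at this
  rw [himg]
  exact hK.image hfc

/-- **range criterion.** For a separable state `ρ` there is a
finite family of product vectors `ψ_i ⊗ φ_i` spanning the range of `ρ` whose
partial conjugates `ψ_i ⊗ φ_i*` span the range of `ρ^{T₂}`; in particular each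
`ψ_i ⊗ φ_i` lies in the range of `ρ` and each `ψ_i ⊗ φ_i*` lies in the range
of `ρ^{T₂}`. -/
theorem separable_range_criterion {m₁ m₂ : ℕ}
    (ρ : Matrix (Fin m₁ × Fin m₂) (Fin m₁ × Fin m₂) ℂ)
    (hρ : IsState ρ) (hsep : IsSepState ρ) :
    ∃ (N : ℕ) (ψ : Fin N → Fin m₁ → ℂ) (φ : Fin N → Fin m₂ → ℂ),
      Submodule.span ℂ (Set.range fun i => tens (ψ i) (φ i)) =
        LinearMap.range ρ.mulVecLin ∧
      Submodule.span ℂ (Set.range fun i => tens (ψ i) (fun j => star (φ i j))) =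
        LinearMap.range (pt₂ ρ).mulVecLin ∧
      (∀ i, ∃ w, ρ.mulVec w = tens (ψ i) (φ i)) ∧
      (∀ i, ∃ w, (pt₂ ρ).mulVec w = tens (ψ i) (fun j => star (φ i j))) := by
  classical
  set S : Set (Matrix (Fin m₁ × Fin m₂) (Fin m₁ × Fin m₂) ℂ) :=
    {σ | ∃ (A : Matrix (Fin m₁) (Fin m₁) ℂ) (B : Matrix (Fin m₂) (Fin m₂) ℂ),
        IsState A ∧ IsState B ∧ σ = A ⊗ₖ B} with hS
  haveI : FiniteDimensional ℝ (Matrix (Fin m₁ × Fin m₂) (Fin m₁ × Fin m₂) ℂ) :=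
    Module.Finite.trans ℂ _
  have hScompact : IsCompact S := by
    have hSeq : S = (fun p : Matrix (Fin m₁) (Fin m₁) ℂ × Matrix (Fin m₂) (Fin m₂) ℂ =>
        p.1 ⊗ₖ p.2) ''
        ({A | A.PosSemidef ∧ A.trace = 1} ×ˢ {B | B.PosSemidef ∧ B.trace = 1}) := by
      ext σ
      constructor
      · rintro ⟨A, B, hA, hB, rfl⟩
        exact ⟨(A, B), ⟨hA, hB⟩, rfl⟩
      · rintro ⟨⟨A, B⟩, ⟨hA, hB⟩, rfl⟩
        exact ⟨A, B, hA, hB, rfl⟩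
    rw [hSeq]
    refine (isCompact_stateSet.prod isCompact_stateSet).image ?_
    exact continuous_matrix fun i j =>
      (continuous_fst.matrix_elem i.1 j.1).mul (continuous_snd.matrix_elem i.2 j.2)
  have hmem : ρ ∈ convexHull ℝ S := by
    have hclosed : IsClosed (convexHull ℝ S) := (myIsCompact_convexHull hScompact).isClosed
    have := hsep
    rw [IsSepState, ← hS, hclosed.closure_eq] at this
    exact this
  rw [convexHull_eq] at hmem
  obtain ⟨ι, t, w, z, hw0, hw1, hzS, hcm⟩ := hmem
  have hρeq : ρ = ∑ i ∈ t, w i • z i := by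
    rw [← hcm, Finset.centerMass_eq_of_sum_1 _ _ hw1]
  choose A B hA hB hz using fun i : ↥t => hzS i i.2
  set I := ↥t × Fin m₁ × Fin m₂ with hI
  set Ψ : I → Fin m₁ → ℂ := fun a => fun x =>
    (Real.sqrt (w a.1 * (hA a.1).1.1.eigenvalues a.2.1 * (hB a.1).1.1.eigenvalues a.2.2) : ℂ) *
    ((hA a.1).1.1.eigenvectorUnitary : Matrix (Fin m₁) (Fin m₁) ℂ) x a.2.1 with hΨ
  set Φ : I → Fin m₂ → ℂ := fun a => fun y =>
    ((hB a.1).1.1.eigenvectorUnitary : Matrix (Fin m₂) (Fin m₂) ℂ) y a.2.2 with hΦ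
  have hdecomp : ρ = ∑ a : I, proj (tens (Ψ a) (Φ a)) := by
    rw [hρeq, ← Finset.sum_coe_sort t (fun i => w i • z i)]
    calc ∑ i : ↥t, w ↑i • z ↑i
        = ∑ i : ↥t, ∑ k, ∑ l, proj (tens (Ψ (i, k, l)) (Φ (i, k, l))) := by
          refine Finset.sum_congr rfl fun i _ => ?_
          rw [hz i]
          exact smul_kron_decomp (w ↑i) (hw0 _ i.2) (hA i).1 (hB i).1
      _ = ∑ a : I, proj (tens (Ψ a) (Φ a)) := by
          rw [Fintype.sum_prod_type]
          exact Finset.sum_congr rfl fun i _ =>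
            (Fintype.sum_prod_type (fun p : Fin m₁ × Fin m₂ => proj (tens (Ψ (i, p)) (Φ (i, p))))).symm
  have hpt : pt₂ ρ = ∑ a : I, proj (tens (Ψ a) (fun j => star (Φ a j))) := by
    rw [hdecomp, pt2_sum_proj]
  have h1 : LinearMap.range ρ.mulVecLin
      = Submodule.span ℂ (Set.range fun a : I => tens (Ψ a) (Φ a)) := by
    rw [hdecomp]
    exact range_sum_proj _
  have h2 : LinearMap.range (pt₂ ρ).mulVecLin
      = Submodule.span ℂ (Set.range fun a : I => tens (Ψ a) (fun j => star (Φ a j))) := by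
    rw [hpt]
    exact range_sum_proj _
  set N := Fintype.card I with hN
  set e : Fin N ≃ I := (Fintype.equivFin I).symm with he
  refine ⟨N, fun i => Ψ (e i), fun i => Φ (e i), ?_, ?_, ?_, ?_⟩
  · rw [show (Set.range fun i => tens (Ψ (e i)) (Φ (e i)))
        = Set.range fun a : I => tens (Ψ a) (Φ a) by
      rw [show (fun i => tens (Ψ (e i)) (Φ (e i)))
          = (fun a : I => tens (Ψ a) (Φ a)) ∘ e from rfl, Set.range_comp,
        e.range_eq_univ, Set.image_univ]]
    exact h1.symm
  · rw [show (Set.range fun i => tens (Ψ (e i)) fun j => star (Φ (e i) j))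
        = Set.range fun a : I => tens (Ψ a) fun j => star (Φ a j) by
      rw [show (fun i => tens (Ψ (e i)) fun j => star (Φ (e i) j))
          = (fun a : I => tens (Ψ a) fun j => star (Φ a j)) ∘ e from rfl, Set.range_comp,
        e.range_eq_univ, Set.image_univ]]
    exact h2.symm
  · intro i
    have : tens (Ψ (e i)) (Φ (e i)) ∈ LinearMap.range ρ.mulVecLin := by
      rw [h1]
      exact Submodule.subset_span ⟨e i, rfl⟩
    obtain ⟨v, hv⟩ := this
    exact ⟨v, hv⟩
  · intro i
    have : (tens (Ψ (e i)) fun j => star (Φ (e i) j))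
        ∈ LinearMap.range (pt₂ ρ).mulVecLin := by
      rw [h2]
      exact Submodule.subset_span ⟨e i, rfl⟩
    obtain ⟨v, hv⟩ := this
    exact ⟨v, hv⟩
end
end

section
/- If ρ is a separable state on ℂ^{m₁} ⊗ ℂ^{m₂}, then its partial transposition ρ^{T₂} is positive semidefinite (and is again a separable state). -/
open scoped ComplexOrder
open Matrix Kronecker

noncomputable section

/- ### Auxiliary lemmas -/

lemma kron_conjTranspose {l m p q : Type*} (A : Matrix l m ℂ) (B : Matrix p q ℂ) :
    (A ⊗ₖ B)ᴴ = Aᴴ ⊗ₖ Bᴴ := by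
  ext ⟨i, j⟩ ⟨k, l⟩
  simp [conjTranspose_apply, kroneckerMap_apply]

lemma psd_kron {n₁ n₂ : Type*} [Fintype n₁] [Fintype n₂] [DecidableEq n₁] [DecidableEq n₂]
    {A : Matrix n₁ n₁ ℂ} {B : Matrix n₂ n₂ ℂ} (hA : A.PosSemidef) (hB : B.PosSemidef) :
    (A ⊗ₖ B).PosSemidef := by
  exact hA.kronecker hB

lemma psd_smul {n : Type*} [Fintype n] {A : Matrix n n ℂ} (hA : A.PosSemidef)
    {c : ℝ} (hc : 0 ≤ c) : (c • A).PosSemidef := by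
  refine Matrix.posSemidef_iff_dotProduct_mulVec.mpr ⟨?_, fun x => ?_⟩
  · unfold Matrix.IsHermitian
    rw [conjTranspose_smul, hA.1]
    norm_num
  · rw [smul_mulVec, dotProduct_smul, Complex.real_smul]
    exact mul_nonneg (by exact_mod_cast hc) (hA.dotProduct_mulVec_nonneg x)

/-- The quadratic form `σ ↦ x* σ x` as a linear map. -/
def quadLM {n : Type*} [Fintype n] (x : n → ℂ) : Matrix n n ℂ →ₗ[ℂ] ℂ where
  toFun σ := star x ⬝ᵥ σ *ᵥ x
  map_add' a b := by simp [add_mulVec, dotProduct_add]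
  map_smul' c a := by simp [smul_mulVec, dotProduct_smul]

lemma isClosed_nonneg_complex : IsClosed {z : ℂ | 0 ≤ z} := by
  have : {z : ℂ | 0 ≤ z} = Complex.re ⁻¹' Set.Ici 0 ∩ Complex.im ⁻¹' {0} := by
    ext z
    simp [Complex.le_def, eq_comm]
  rw [this]
  exact (isClosed_Ici.preimage Complex.continuous_re).inter
    (isClosed_singleton.preimage Complex.continuous_im)

lemma isClosed_psd {n : Type*} [Fintype n] [DecidableEq n] :
    IsClosed {σ : Matrix n n ℂ | σ.PosSemidef} := by
  have hHerm : IsClosed {σ : Matrix n n ℂ | σ.IsHermitian} := by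
    have hcont : Continuous fun σ : Matrix n n ℂ => σᴴ := by
      apply continuous_matrix
      intro i j
      have h1 : Continuous fun σ : Matrix n n ℂ => σ j :=
        continuous_apply (A := fun _ : n => n → ℂ) j
      have h2 : Continuous fun σ : Matrix n n ℂ => σ j i :=
        (continuous_apply (A := fun _ : n => ℂ) i).comp h1
      exact h2.star
    exact isClosed_eq hcont continuous_id
  have : {σ : Matrix n n ℂ | σ.PosSemidef} =
      {σ : Matrix n n ℂ | σ.IsHermitian} ∩ ⋂ x, {σ | 0 ≤ star x ⬝ᵥ σ *ᵥ x} := by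
    ext σ
    simp [Matrix.posSemidef_iff_dotProduct_mulVec, Set.mem_iInter]
  rw [this]
  refine hHerm.inter (isClosed_iInter fun x => ?_)
  exact isClosed_nonneg_complex.preimage (quadLM x).continuous_of_finiteDimensional

lemma convex_psd {n : Type*} [Fintype n] [DecidableEq n] :
    Convex ℝ {σ : Matrix n n ℂ | σ.PosSemidef} := fun A hA B hB a b ha hb _ =>
  (psd_smul hA ha).add (psd_smul hB hb)

/-- `pt₂` as a linear map. -/
def ptLM {m₁ m₂ : ℕ} : Matrix (Fin m₁ × Fin m₂) (Fin m₁ × Fin m₂) ℂ →ₗ[ℝ]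
    Matrix (Fin m₁ × Fin m₂) (Fin m₁ × Fin m₂) ℂ where
  toFun := pt₂
  map_add' a b := rfl
  map_smul' c a := rfl

lemma pt₂_kron {m₁ m₂ : ℕ} (A : Matrix (Fin m₁) (Fin m₁) ℂ) (B : Matrix (Fin m₂) (Fin m₂) ℂ) :
    pt₂ (A ⊗ₖ B) = A ⊗ₖ Bᵀ := rfl

lemma sep_psd {m₁ m₂ : ℕ} {ρ : Matrix (Fin m₁ × Fin m₂) (Fin m₁ × Fin m₂) ℂ}
    (hsep : IsSepState ρ) : ρ.PosSemidef := by
  refine isClosed_psd.closure_subset ((closure_mono (convexHull_min ?_ convex_psd)) hsep)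
  rintro σ ⟨A, B, hA, hB, rfl⟩
  exact psd_kron hA.1 hB.1

lemma sep_pt₂ {m₁ m₂ : ℕ} {ρ : Matrix (Fin m₁ × Fin m₂) (Fin m₁ × Fin m₂) ℂ}
    (hsep : IsSepState ρ) : IsSepState (pt₂ ρ) := by
  set S := {σ : Matrix (Fin m₁ × Fin m₂) (Fin m₁ × Fin m₂) ℂ |
      ∃ (A : Matrix (Fin m₁) (Fin m₁) ℂ) (B : Matrix (Fin m₂) (Fin m₂) ℂ),
        IsState A ∧ IsState B ∧ σ = A ⊗ₖ B} with hS
  have hmaps : pt₂ '' S ⊆ S := by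
    rintro σ ⟨τ, ⟨A, B, hA, hB, rfl⟩, rfl⟩
    exact ⟨A, Bᵀ, hA, ⟨hB.1.transpose, by rw [Matrix.trace_transpose]; exact hB.2⟩, pt₂_kron A B⟩
  have hcont : Continuous (pt₂ : Matrix (Fin m₁ × Fin m₂) (Fin m₁ × Fin m₂) ℂ → _) :=
    (ptLM (m₁ := m₁) (m₂ := m₂)).continuous_of_finiteDimensional
  have h1 : pt₂ ρ ∈ closure (pt₂ '' convexHull ℝ S) :=
    image_closure_subset_closure_image hcont ⟨ρ, hsep, rfl⟩
  have h2 : pt₂ '' convexHull ℝ S = convexHull ℝ (pt₂ '' S) :=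
    (ptLM (m₁ := m₁) (m₂ := m₂)).image_convexHull S
  rw [h2] at h1
  exact closure_mono (convexHull_mono hmaps) h1

/-- **Peres criterion.** The partial transposition of a separable
state is positive semidefinite, and it is again a separable state. -/
theorem partial_transpose_of_separable {m₁ m₂ : ℕ}
    (ρ : Matrix (Fin m₁ × Fin m₂) (Fin m₁ × Fin m₂) ℂ)
    (hρ : IsState ρ) (hsep : IsSepState ρ) :
    (pt₂ ρ).PosSemidef ∧ IsState (pt₂ ρ) ∧ IsSepState (pt₂ ρ) := by
  have hsep' := sep_pt₂ hsep
  have hpsd := sep_psd hsep'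
  refine ⟨hpsd, ⟨hpsd, ?_⟩, hsep'⟩
  have : (pt₂ ρ).trace = ρ.trace := rfl
  rw [this, hρ.2]
end
end

section
/- Fix a with 0 < a < 1 and set x = √((1+a)/(1−a)). Every nonzero product vector u = ψ ⊗ φ (ψ, φ ∈ ℂ³) lying in the range of ρ_a^{T₂} is a scalar multiple of one of the following: (1,s,0)⊗(1,s,0) for some s ∈ ℂ; (0,0,1)⊗(1,0,x); (0,1,0)⊗(0,1,0); (1,0,0)⊗(1,0,0); or (1,0,t)⊗(t^{-1}+x^{-1},0,1) for some nonzero t ∈ ℂ (coordinates in the standard basis). -/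
open scoped ComplexOrder
open Matrix Kronecker

noncomputable section

/-- Standard basis vectors of `ℂ^n`. -/
def e (n : ℕ) (i : Fin n) : Fin n → ℂ := fun j => if j = i then 1 else 0

/-- The maximally entangled vector `Ψ = (e₁⊗e₁ + e₂⊗e₂ + e₃⊗e₃)/√3`. -/
def Ψ3 : Fin 3 × Fin 3 → ℂ :=
  (Real.sqrt 3 : ℂ)⁻¹ •
    (tens (e 3 0) (e 3 0) + tens (e 3 1) (e 3 1) + tens (e 3 2) (e 3 2))

/-- The projector `Q = I⊗I − (Σ_i P_{e_i⊗e_i} + P_{e₃⊗e₁})`. -/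
def Q3 : Matrix (Fin 3 × Fin 3) (Fin 3 × Fin 3) ℂ :=
  1 - (∑ i : Fin 3, proj (tens (e 3 i) (e 3 i)) + proj (tens (e 3 2) (e 3 0)))

/-- The inseparable state `ρ_insep = (3/8) P_Ψ + (1/8) Q`. -/
def ρinsep : Matrix (Fin 3 × Fin 3) (Fin 3 × Fin 3) ℂ :=
  (3 / 8 : ℂ) • proj Ψ3 + (1 / 8 : ℂ) • Q3

/-- The product vector `Φ_a = e₃ ⊗ (√((1+a)/2) e₁ + √((1−a)/2) e₃)`. -/
def Φa (a : ℝ) : Fin 3 × Fin 3 → ℂ :=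
  tens (e 3 2) (fun j =>
    if j = 0 then (Real.sqrt ((1 + a) / 2) : ℂ)
    else if j = 2 then (Real.sqrt ((1 - a) / 2) : ℂ) else 0)

/-- The Horodecki state `ρ_a = (8a/(8a+1)) ρ_insep + (1/(8a+1)) P_{Φ_a}`. -/
def ρA (a : ℝ) : Matrix (Fin 3 × Fin 3) (Fin 3 × Fin 3) ℂ :=
  ((8 * a / (8 * a + 1) : ℝ) : ℂ) • ρinsep +
    ((1 / (8 * a + 1) : ℝ) : ℂ) • proj (Φa a)
private lemma sqrt3_inv_sq : ((Real.sqrt 3 : ℝ):ℂ)⁻¹ * ((Real.sqrt 3 : ℝ):ℂ)⁻¹ = 1/3 := by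
  rw [← mul_inv]; norm_cast
  rw [show Real.sqrt 3 * Real.sqrt 3 = 3 from Real.mul_self_sqrt (by norm_num)]
  norm_num

private lemma row01 (a : ℝ) : ∀ q, pt₂ (ρA a) (0,1) q = pt₂ (ρA a) (1,0) q := by
  rintro ⟨i, μ⟩
  fin_cases i <;> fin_cases μ <;>
    simp [pt₂, ρA, ρinsep, Q3, Ψ3, proj, tens, e, Φa, Matrix.one_apply,
      Fin.sum_univ_three, Matrix.add_apply, Matrix.sub_apply, Matrix.smul_apply,
      Matrix.sum_apply, Pi.add_apply, Pi.smul_apply] <;>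
    norm_num [Prod.ext_iff, Fin.ext_iff, sqrt3_inv_sq]

private lemma row12 (a : ℝ) : ∀ q, pt₂ (ρA a) (1,2) q = pt₂ (ρA a) (2,1) q := by
  rintro ⟨i, μ⟩
  fin_cases i <;> fin_cases μ <;>
    simp [pt₂, ρA, ρinsep, Q3, Ψ3, proj, tens, e, Φa, Matrix.one_apply,
      Fin.sum_univ_three, Matrix.add_apply, Matrix.sub_apply, Matrix.smul_apply,
      Matrix.sum_apply, Pi.add_apply, Pi.smul_apply] <;>
    norm_num [Prod.ext_iff, Fin.ext_iff, sqrt3_inv_sq]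

private lemma keyrow (a : ℝ) (ha0 : 0 < a) (ha1 : a < 1) :
    ∀ q, ((Real.sqrt ((1+a)/2) :ℝ):ℂ) * pt₂ (ρA a) (0,2) q
      - ((Real.sqrt ((1+a)/2) :ℝ):ℂ) * pt₂ (ρA a) (2,0) q
      + ((Real.sqrt ((1-a)/2) :ℝ):ℂ) * pt₂ (ρA a) (2,2) q = 0 := by
  have hw : ((Real.sqrt (1+a) :ℝ):ℂ) * ((Real.sqrt (1+a) :ℝ):ℂ) = 1 + (a:ℂ) := by
    norm_cast; exact Real.mul_self_sqrt (by linarith)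
  have hv : ((Real.sqrt (1-a) :ℝ):ℂ) * ((Real.sqrt (1-a) :ℝ):ℂ) = 1 - (a:ℂ) := by
    norm_cast; exact Real.mul_self_sqrt (by linarith)
  have hs : ((Real.sqrt 2 :ℝ):ℂ) * ((Real.sqrt 2 :ℝ):ℂ) = 2 := by
    norm_cast; exact Real.mul_self_sqrt (by norm_num)
  have hsi : ((Real.sqrt 2 :ℝ):ℂ)⁻¹ = ((Real.sqrt 2 :ℝ):ℂ)/2 := by
    rw [eq_div_iff (by norm_num : (2:ℂ) ≠ 0), ← hs]; field_simp
  rintro ⟨i, μ⟩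
  fin_cases i <;> fin_cases μ <;>
    simp only [pt₂, ρA, ρinsep, Q3, Ψ3, proj, tens, e, Φa, Matrix.one_apply,
      Fin.sum_univ_three, Matrix.add_apply, Matrix.sub_apply, Matrix.smul_apply,
      Matrix.sum_apply, Pi.add_apply, Pi.smul_apply, smul_eq_mul, Prod.mk.injEq,
      Fin.isValue] <;>
    simp only [star_mul', star_one, star_zero, star_inv₀, Complex.star_def,
      Complex.conj_ofReal, Prod.ext_iff, Fin.ext_iff] <;>
    norm_num [sqrt3_inv_sq, hsi]
  · simp only [division_def, hsi]
    linear_combination (((Real.sqrt (1+a):ℝ):ℂ)*((Real.sqrt 2:ℝ):ℂ)^3*(1/8)*(1+8*(a:ℂ))⁻¹)*hv - (((Real.sqrt (1+a):ℝ):ℂ)*((Real.sqrt 2:ℝ):ℂ)^3*(1/8)*(1+8*(a:ℂ))⁻¹)*hw - ((a:ℂ)*((Real.sqrt (1+a):ℝ):ℂ)*((Real.sqrt 2:ℝ):ℂ)*(1/4)*(1+8*(a:ℂ))⁻¹)*hs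
  · simp only [division_def, hsi]
    linear_combination (((Real.sqrt (1-a):ℝ):ℂ)*((Real.sqrt 2:ℝ):ℂ)^3*(1/8)*(1+8*(a:ℂ))⁻¹)*hv - (((Real.sqrt (1-a):ℝ):ℂ)*((Real.sqrt 2:ℝ):ℂ)^3*(1/8)*(1+8*(a:ℂ))⁻¹)*hw - ((a:ℂ)*((Real.sqrt (1-a):ℝ):ℂ)*((Real.sqrt 2:ℝ):ℂ)*(1/4)*(1+8*(a:ℂ))⁻¹)*hs

/-- For `0 < a < 1` and `x = √((1+a)/(1−a))`, every nonzero
product vector in the range of `ρ_a^{T₂}` is a scalar multiple of one of: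
`(1,s,0)⊗(1,s,0)`, `(0,0,1)⊗(1,0,x)`, `(0,1,0)⊗(0,1,0)`, `(1,0,0)⊗(1,0,0)`,
or `(1,0,t)⊗(t⁻¹+x⁻¹,0,1)` with `t ≠ 0`. -/
theorem product_vectors_in_range_ρA_pt₂ (a : ℝ) (ha0 : 0 < a) (ha1 : a < 1)
    (ψ φ : Fin 3 → ℂ) (hne : tens ψ φ ≠ 0)
    (hmem : ∃ w, (pt₂ (ρA a)).mulVec w = tens ψ φ) :
    (∃ c s : ℂ, tens ψ φ = c • tens ![1, s, 0] ![1, s, 0]) ∨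
    (∃ c : ℂ, tens ψ φ =
      c • tens ![0, 0, 1] ![1, 0, (Real.sqrt ((1 + a) / (1 - a)) : ℂ)]) ∨
    (∃ c : ℂ, tens ψ φ = c • tens ![0, 1, 0] ![0, 1, 0]) ∨
    (∃ c : ℂ, tens ψ φ = c • tens ![1, 0, 0] ![1, 0, 0]) ∨
    (∃ c t : ℂ, t ≠ 0 ∧ tens ψ φ =
      c • tens ![1, 0, t] ![t⁻¹ + (Real.sqrt ((1 + a) / (1 - a)) : ℂ)⁻¹, 0, 1]) := by
  obtain ⟨w, hw⟩ := hmem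
  obtain ⟨SP, hSPdef⟩ : ∃ x : ℂ, ((Real.sqrt ((1+a)/2) :ℝ):ℂ) = x := ⟨_, rfl⟩
  obtain ⟨SQ, hSQdef⟩ : ∃ x : ℂ, ((Real.sqrt ((1-a)/2) :ℝ):ℂ) = x := ⟨_, rfl⟩
  have hSP0 : SP ≠ 0 := by
    rw [← hSPdef]
    simp only [ne_eq, Complex.ofReal_eq_zero]
    positivity
  have hSQ0 : SQ ≠ 0 := by
    have h2 : (0:ℝ) < (1-a)/2 := by linarith
    rw [← hSQdef]
    simp only [ne_eq, Complex.ofReal_eq_zero]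
    exact Real.sqrt_ne_zero'.2 h2
  have hx : ((Real.sqrt ((1 + a) / (1 - a)) : ℝ):ℂ) = SP / SQ := by
    rw [← hSPdef, ← hSQdef]
    norm_cast
    rw [← Real.sqrt_div (by linarith : (0:ℝ) ≤ (1+a)/2)]
    congr 1
    have h1 : (1:ℝ) - a ≠ 0 := by linarith
    field_simp
  -- the three linear constraints
  have E1 : ψ 0 * φ 1 = ψ 1 * φ 0 := by
    have h : (pt₂ (ρA a)).mulVec w (0,1) = (pt₂ (ρA a)).mulVec w (1,0) := by
      simp only [Matrix.mulVec, dotProduct]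
      exact Finset.sum_congr rfl fun q _ => by rw [row01 a q]
    rw [hw] at h; exact h
  have E2 : ψ 1 * φ 2 = ψ 2 * φ 1 := by
    have h : (pt₂ (ρA a)).mulVec w (1,2) = (pt₂ (ρA a)).mulVec w (2,1) := by
      simp only [Matrix.mulVec, dotProduct]
      exact Finset.sum_congr rfl fun q _ => by rw [row12 a q]
    rw [hw] at h; exact h
  have E3 : SP * (ψ 0 * φ 2) - SP * (ψ 2 * φ 0) + SQ * (ψ 2 * φ 2) = 0 := by
    have h : ((Real.sqrt ((1+a)/2) :ℝ):ℂ) * (pt₂ (ρA a)).mulVec w (0,2)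
        - ((Real.sqrt ((1+a)/2) :ℝ):ℂ) * (pt₂ (ρA a)).mulVec w (2,0)
        + ((Real.sqrt ((1-a)/2) :ℝ):ℂ) * (pt₂ (ρA a)).mulVec w (2,2) = 0 := by
      simp only [Matrix.mulVec, dotProduct, Finset.mul_sum]
      rw [← Finset.sum_sub_distrib, ← Finset.sum_add_distrib]
      exact Finset.sum_eq_zero fun q _ => by
        linear_combination w q * keyrow a ha0 ha1 q
    rw [hw, hSPdef, hSQdef] at h; exact h
  -- nonvanishing
  obtain ⟨p0, hp0⟩ : ∃ p : Fin 3 × Fin 3, ψ p.1 * φ p.2 ≠ 0 := by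
    by_contra h; push_neg at h; exact hne (funext fun p => h p)
  have hψor : ψ 0 ≠ 0 ∨ ψ 1 ≠ 0 ∨ ψ 2 ≠ 0 := by
    obtain ⟨i, hi⟩ : ∃ i, ψ i ≠ 0 := ⟨p0.1, fun h => hp0 (by rw [h, zero_mul])⟩
    fin_cases i <;> tauto
  have hφor : φ 0 ≠ 0 ∨ φ 1 ≠ 0 ∨ φ 2 ≠ 0 := by
    obtain ⟨i, hi⟩ : ∃ i, φ i ≠ 0 := ⟨p0.2, fun h => hp0 (by rw [h, mul_zero])⟩
    fin_cases i <;> tauto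
  by_cases hγ : ψ 2 = 0
  · by_cases hh : φ 2 = 0
    · by_cases hα : ψ 0 = 0
      · -- conclusion 3
        have hβ : ψ 1 ≠ 0 := by tauto
        have hf : φ 0 = 0 := by
          have h := E1; rw [hα, zero_mul] at h
          exact (mul_eq_zero.1 h.symm).resolve_left hβ
        refine Or.inr (Or.inr (Or.inl ⟨ψ 1 * φ 1, funext fun p => ?_⟩))
        fin_cases p <;>
          simp [tens, hα, hγ, hf, hh, Pi.smul_apply, smul_eq_mul] <;> ring
      · -- conclusion 1
        have hφ1 : φ 1 = ψ 1 * φ 0 / ψ 0 := by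
          rw [eq_div_iff hα]; linear_combination E1
        refine Or.inl ⟨ψ 0 * φ 0, ψ 1 / ψ 0, funext fun p => ?_⟩
        fin_cases p <;>
          simp [tens, hγ, hh, hφ1, Pi.smul_apply, smul_eq_mul] <;>
          field_simp <;> ring
    · exfalso
      have h1 : ψ 1 = 0 := by
        have h := E2; rw [hγ, zero_mul] at h
        exact (mul_eq_zero.1 h).resolve_right hh
      have h0 : ψ 0 = 0 := by
        have h := E3; rw [hγ] at h
        simp only [zero_mul, mul_zero, sub_zero, add_zero] at h
        rcases mul_eq_zero.1 h with h | h
        · exact absurd h hSP0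
        · exact (mul_eq_zero.1 h).resolve_right hh
      tauto
  · -- ψ 2 ≠ 0
    have hh : φ 2 ≠ 0 := by
      intro hh
      have hg : φ 1 = 0 := by
        have h := E2; rw [hh, mul_zero] at h
        exact (mul_eq_zero.1 h.symm).resolve_left hγ
      have hf : φ 0 = 0 := by
        have h := E3; rw [hh] at h
        simp only [mul_zero, zero_mul, zero_sub, add_zero, neg_eq_zero] at h
        rcases mul_eq_zero.1 h with h | h
        · exact absurd h hSP0
        · exact (mul_eq_zero.1 h).resolve_left hγ
      tauto
    have hβ : ψ 1 = 0 := by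
      have key2 : ψ 1 * (ψ 0 * φ 2 - ψ 2 * φ 0) = 0 := by
        linear_combination ψ 0 * E2 + ψ 2 * E1
      have h : ψ 1 * (SQ * (ψ 2 * φ 2)) = 0 := by
        linear_combination ψ 1 * E3 - SP * key2
      rcases mul_eq_zero.1 h with h | h
      · exact h
      · rcases mul_eq_zero.1 h with h | h
        · exact absurd h hSQ0
        · rcases mul_eq_zero.1 h with h | h
          · exact absurd h hγ
          · exact absurd h hh
    have hg : φ 1 = 0 := by
      have h := E2; rw [hβ, zero_mul] at h
      exact (mul_eq_zero.1 h.symm).resolve_left hγ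
    by_cases hα : ψ 0 = 0
    · -- conclusion 2
      have hφ0 : φ 0 = SQ * φ 2 / SP := by
        rw [eq_div_iff hSP0]
        have h : ψ 2 * (φ 0 * SP) = ψ 2 * (SQ * φ 2) := by
          linear_combination -E3 + SP * φ 2 * hα
        exact mul_left_cancel₀ hγ h
      refine Or.inr (Or.inl ⟨ψ 2 * φ 2 * SQ / SP, ?_⟩)
      rw [hx]
      funext p
      fin_cases p <;>
        simp [tens, hα, hβ, hg, hφ0, Pi.smul_apply, smul_eq_mul] <;>
        field_simp <;> ring
    · -- conclusion 5
      have hφ0 : φ 0 = (SP * ψ 0 * φ 2 + SQ * ψ 2 * φ 2) / (SP * ψ 2) := by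
        rw [eq_div_iff (mul_ne_zero hSP0 hγ)]
        linear_combination -E3
      have hxi : ((Real.sqrt ((1 + a) / (1 - a)) : ℝ):ℂ)⁻¹ = SQ / SP := by
        rw [hx, inv_div]
      refine Or.inr (Or.inr (Or.inr (Or.inr
        ⟨ψ 0 * φ 2, ψ 2 / ψ 0, div_ne_zero hγ hα, ?_⟩)))
      rw [hxi]
      funext p
      fin_cases p <;>
        simp [tens, hβ, hg, hφ0, Pi.smul_apply, smul_eq_mul] <;>
        field_simp <;> ring
end
end

section
/- Fix a with 0 < a < 1. For every product vector ψ ⊗ φ in the range of ρ_a^{T₂}, the partially conjugated vector ψ ⊗ φ* (φ* the componentwise complex conjugate of φ) is orthogonal to the vector e₃ ⊗ e₂; moreover e₃ ⊗ e₂ belongs to the range of ρ_a. Hence no family of product vectors in the range of ρ_a^{T₂} has partial conjugates spanning the range of ρ_a. -/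
open scoped ComplexOrder
open Matrix Kronecker

noncomputable section

private lemma m3' : ((Real.sqrt 3 : ℝ) : ℂ)⁻¹ * ((Real.sqrt 3 : ℝ) : ℂ)⁻¹ = (3 : ℂ)⁻¹ := by
  rw [← mul_inv, ← Complex.ofReal_mul, Real.mul_self_sqrt (by norm_num : (0:ℝ) ≤ 3)]
  norm_num

private lemma constrA (a : ℝ) (w : Fin 3 × Fin 3 → ℂ) :
    (pt₂ (ρA a)).mulVec w (0,1) = (pt₂ (ρA a)).mulVec w (1,0) := by
  simp [Matrix.mulVec, dotProduct, Fintype.sum_prod_type, Fin.sum_univ_three,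
    pt₂, ρA, ρinsep, proj, Ψ3, Q3, Φa, tens, e, Matrix.one_apply, Prod.mk.injEq,
    Matrix.sum_apply, -Real.sqrt_div']
  rw [m3']
  ring

private lemma constrB (a : ℝ) (w : Fin 3 × Fin 3 → ℂ) :
    (pt₂ (ρA a)).mulVec w (1,2) = (pt₂ (ρA a)).mulVec w (2,1) := by
  simp [Matrix.mulVec, dotProduct, Fintype.sum_prod_type, Fin.sum_univ_three,
    pt₂, ρA, ρinsep, proj, Ψ3, Q3, Φa, tens, e, Matrix.one_apply, Prod.mk.injEq,
    Matrix.sum_apply, -Real.sqrt_div']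
  rw [m3']
  ring

private lemma constrC (a : ℝ) (ha0 : 0 < a) (ha1 : a < 1) (w : Fin 3 × Fin 3 → ℂ) :
    (Real.sqrt ((1+a)/2) : ℂ) * (pt₂ (ρA a)).mulVec w (2,0) =
      (Real.sqrt ((1+a)/2) : ℂ) * (pt₂ (ρA a)).mulVec w (0,2)
      + (Real.sqrt ((1-a)/2) : ℂ) * (pt₂ (ρA a)).mulVec w (2,2) := by
  have hb : ((Real.sqrt ((1+a)/2) : ℝ) : ℂ) * ((Real.sqrt ((1+a)/2) : ℝ) : ℂ) = (1 + (a:ℂ))/2 := by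
    rw [← Complex.ofReal_mul, Real.mul_self_sqrt (by linarith)]
    push_cast; ring
  have hc : ((Real.sqrt ((1-a)/2) : ℝ) : ℂ) * ((Real.sqrt ((1-a)/2) : ℝ) : ℂ) = (1 - (a:ℂ))/2 := by
    rw [← Complex.ofReal_mul, Real.mul_self_sqrt (by linarith)]
    push_cast; ring
  simp [Matrix.mulVec, dotProduct, Fintype.sum_prod_type, Fin.sum_univ_three,
    pt₂, ρA, ρinsep, proj, Ψ3, Q3, Φa, tens, e, Matrix.one_apply, Prod.mk.injEq,
    Matrix.sum_apply, -Real.sqrt_div']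
  rw [m3']
  linear_combination ((8*(a:ℂ)+1)⁻¹ * (((Real.sqrt ((1+a)/2) : ℝ) : ℂ) * w (2,0)
    + ((Real.sqrt ((1-a)/2) : ℝ) : ℂ) * w (2,2))) * (hb - hc)

private lemma part1 (a : ℝ) (ha0 : 0 < a) (ha1 : a < 1) (ψ φ : Fin 3 → ℂ)
    (h : ∃ w, (pt₂ (ρA a)).mulVec w = tens ψ φ) :
    star (tens ψ (fun j => star (φ j))) ⬝ᵥ tens (e 3 2) (e 3 1) = 0 := by
  obtain ⟨w, hw⟩ := h
  set b : ℂ := ((Real.sqrt ((1+a)/2) : ℝ) : ℂ) with hbdef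
  set c : ℂ := ((Real.sqrt ((1-a)/2) : ℝ) : ℂ) with hcdef
  have hA : ψ 0 * φ 1 = ψ 1 * φ 0 := by
    have := constrA a w; rw [hw] at this; simpa [tens] using this
  have hB : ψ 1 * φ 2 = ψ 2 * φ 1 := by
    have := constrB a w; rw [hw] at this; simpa [tens] using this
  have hC : b * (ψ 2 * φ 0) = b * (ψ 0 * φ 2) + c * (ψ 2 * φ 2) := by
    have := constrC a ha0 ha1 w; rw [hw] at this; simpa only [tens] using this
  have hcne : c ≠ 0 := by
    rw [hcdef]
    simp only [ne_eq, Complex.ofReal_eq_zero]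
    exact (Real.sqrt_pos.mpr (by linarith)).ne'
  simp only [dotProduct, Fintype.sum_prod_type, Fin.sum_univ_three, tens, e]
  simp [tens, e]
  by_contra h
  push_neg at h
  obtain ⟨hψ2, hφ1⟩ := h
  have key : c * (ψ 2 * φ 1) * φ 2 = 0 := by
    linear_combination (-(φ 1)) * hC - b * (φ 2) * hA - b * (φ 0) * hB
  have hφ2 : φ 2 = 0 := by
    rcases mul_eq_zero.mp key with h' | h'
    · rcases mul_eq_zero.mp h' with h'' | h''
      · exact absurd h'' hcne
      · exact absurd h'' (mul_ne_zero hψ2 hφ1)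
    · exact h'
  apply mul_ne_zero hψ2 hφ1
  rw [← hB, hφ2, mul_zero]

private lemma part2 (a : ℝ) (ha0 : 0 < a) :
    (ρA a).mulVec (fun p => if p = (2,1) then (((8*a+1)/a : ℝ) : ℂ) else 0)
      = tens (e 3 2) (e 3 1) := by
  have haC : (a : ℂ) ≠ 0 := Complex.ofReal_ne_zero.mpr ha0.ne'
  have hD : (8*(a:ℂ)+1) ≠ 0 := by
    have : ((8*a+1 : ℝ) : ℂ) ≠ 0 := Complex.ofReal_ne_zero.mpr (by positivity)
    push_cast at this; exact this
  funext p
  obtain ⟨i, μ⟩ := p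
  fin_cases i <;> fin_cases μ <;>
    · simp [Matrix.mulVec, dotProduct, Fintype.sum_prod_type, Fin.sum_univ_three,
        ρA, ρinsep, proj, Ψ3, Q3, Φa, tens, e, Matrix.one_apply, Prod.mk.injEq,
        Matrix.sum_apply, -Real.sqrt_div']
      try exact fun hcc => absurd hcc (by decide)
      try field_simp
      try ring

/-- For `0 < a < 1`: the partial conjugate of every product
vector in the range of `ρ_a^{T₂}` is orthogonal to `e₃ ⊗ e₂`, while `e₃ ⊗ e₂`
belongs to the range of `ρ_a`; hence no family of product vectors in the range
of `ρ_a^{T₂}` has partial conjugates spanning the range of `ρ_a`. -/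
theorem ρA_range_criterion_violation (a : ℝ) (ha0 : 0 < a) (ha1 : a < 1) :
    (∀ ψ φ : Fin 3 → ℂ, (∃ w, (pt₂ (ρA a)).mulVec w = tens ψ φ) →
      star (tens ψ (fun j => star (φ j))) ⬝ᵥ tens (e 3 2) (e 3 1) = 0) ∧
    (∃ w, (ρA a).mulVec w = tens (e 3 2) (e 3 1)) ∧
    (∀ (ι : Type) (ψs φs : ι → Fin 3 → ℂ),
      (∀ i, ∃ w, (pt₂ (ρA a)).mulVec w = tens (ψs i) (φs i)) →
      Submodule.span ℂ (Set.range fun i => tens (ψs i) (fun j => star (φs i j))) ≠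
        LinearMap.range (ρA a).mulVecLin) := by
  refine ⟨fun ψ φ h => part1 a ha0 ha1 ψ φ h, ⟨_, part2 a ha0⟩, ?_⟩
  intro ι ψs φs hgen heq
  have hv : tens (e 3 2) (e 3 1) ∈ LinearMap.range (ρA a).mulVecLin :=
    ⟨_, by simpa [Matrix.mulVecLin_apply] using part2 a ha0⟩
  rw [← heq] at hv
  have horth : ∀ y ∈ Submodule.span ℂ
      (Set.range fun i => tens (ψs i) (fun j => star (φs i j))),
      star y ⬝ᵥ tens (e 3 2) (e 3 1) = 0 := by
    intro y hy
    induction hy using Submodule.span_induction with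
    | mem x hx =>
      obtain ⟨i, rfl⟩ := hx
      exact part1 a ha0 ha1 (ψs i) (φs i) (hgen i)
    | zero => simp
    | add x y _ _ hx hy => rw [star_add, add_dotProduct, hx, hy, add_zero]
    | smul c x _ hx => rw [star_smul, smul_dotProduct, hx, smul_zero]
  have := horth _ hv
  rw [show star (tens (e 3 2) (e 3 1)) ⬝ᵥ tens (e 3 2) (e 3 1) = 1 by
    simp [dotProduct, Fintype.sum_prod_type, Fin.sum_univ_three, tens, e]] at this
  exact one_ne_zero this
end
end

section
/- For a pure state P_Ψ on ℂ^{m₁} ⊗ ℂ^{m₂} (the projection onto a unit vector Ψ), P_Ψ is separable if and only if its partial transposition P_Ψ^{T₂} is positive semidefinite, and this holds if and only if Ψ is a product vector ψ ⊗ φ. -/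
open scoped ComplexOrder
open Matrix Kronecker

noncomputable section

/-! ### Auxiliary lemmas -/

theorem proj_psd {n : Type*} [Fintype n] (v : n → ℂ) : (proj v).PosSemidef := by
  refine Matrix.posSemidef_iff_dotProduct_mulVec.mpr ⟨?_, fun x => ?_⟩
  · ext i j
    simp [proj, Matrix.conjTranspose_apply, mul_comm]
  · have : star x ⬝ᵥ (proj v) *ᵥ x =
        star (∑ k, star (v k) * x k) * (∑ k, star (v k) * x k) := by
      calc star x ⬝ᵥ (proj v) *ᵥ x
          = ∑ i, ∑ k, star (x i) * (v i * star (v k) * x k) := by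
            simp [dotProduct, Matrix.mulVec, proj, Finset.mul_sum, mul_assoc]
        _ = (∑ i, star (x i) * v i) * (∑ k, star (v k) * x k) := by
            rw [Finset.sum_mul_sum]
            exact Finset.sum_congr rfl fun i _ => Finset.sum_congr rfl fun k _ => by ring
        _ = star (∑ k, star (v k) * x k) * (∑ k, star (v k) * x k) := by
            rw [star_sum]
            congr 1
            exact Finset.sum_congr rfl fun k _ => by simp [mul_comm]
    rw [this]
    exact star_mul_self_nonneg _

theorem my_isClosed_psd {ι : Type*} [Fintype ι] :
    IsClosed {M : Matrix ι ι ℂ | M.PosSemidef} := by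
  have happ : ∀ i j : ι, Continuous fun M : Matrix ι ι ℂ => M i j := fun i j =>
    (continuous_apply j).comp (continuous_apply i)
  have : {M : Matrix ι ι ℂ | M.PosSemidef} =
      {M | Mᴴ = M} ∩ ⋂ x : ι → ℂ, {M | 0 ≤ star x ⬝ᵥ M *ᵥ x} := by
    ext M
    simp only [Set.mem_setOf_eq, Set.mem_inter_iff, Set.mem_iInter]
    exact Matrix.posSemidef_iff_dotProduct_mulVec
  rw [this]
  refine IsClosed.inter ?_ (isClosed_iInter fun x => ?_)
  · refine isClosed_eq (Y := Matrix ι ι ℂ) ?_ continuous_id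
    exact continuous_pi fun i => continuous_pi fun j =>
      Complex.continuous_conj.comp (happ j i)
  · have hc : Continuous fun M : Matrix ι ι ℂ => star x ⬝ᵥ M *ᵥ x := by
      have : (fun M : Matrix ι ι ℂ => star x ⬝ᵥ M *ᵥ x) =
          fun M => ∑ i, ∑ j, star (x i) * M i j * x j := by
        funext M
        simp [dotProduct, Matrix.mulVec, Finset.mul_sum, mul_assoc]
      rw [this]
      exact continuous_finset_sum _ fun i _ => continuous_finset_sum _ fun j _ =>
        ((continuous_const.mul (happ i j)).mul continuous_const)
    have h0 : IsClosed {z : ℂ | 0 ≤ z} := by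
      have : {z : ℂ | 0 ≤ z} = Complex.re ⁻¹' (Set.Ici 0) ∩ Complex.im ⁻¹' {0} := by
        ext z
        simp [Complex.le_def, eq_comm]
      rw [this]
      exact (isClosed_Ici.preimage Complex.continuous_re).inter
        (isClosed_singleton.preimage Complex.continuous_im)
    exact h0.preimage hc

theorem my_psd_smul {ι : Type*} [Fintype ι] {M : Matrix ι ι ℂ} (hM : M.PosSemidef)
    {a : ℝ} (ha : 0 ≤ a) : (a • M).PosSemidef := by
  have h : a • M = (a : ℂ) • M := by
    ext i j; simp [Complex.real_smul]
  have ha' : (0:ℂ) ≤ (a:ℂ) := by exact_mod_cast Complex.zero_le_real.mpr ha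
  rw [h]
  refine Matrix.posSemidef_iff_dotProduct_mulVec.mpr ⟨?_, fun x => ?_⟩
  · have := hM.1
    unfold Matrix.IsHermitian at this ⊢
    rw [Matrix.conjTranspose_smul, this, Complex.star_def, Complex.conj_ofReal]
  · rw [Matrix.smul_mulVec, dotProduct_smul, smul_eq_mul]
    exact mul_nonneg ha' (hM.dotProduct_mulVec_nonneg x)

theorem my_convex_psd {ι : Type*} [Fintype ι] :
    Convex ℝ {M : Matrix ι ι ℂ | M.PosSemidef} := by
  intro A hA B hB a b ha hb _
  exact (my_psd_smul hA ha).add (my_psd_smul hB hb)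

theorem PosSemidef.kron {n m : Type*} [Fintype n] [Fintype m] [DecidableEq n] [DecidableEq m]
    {A : Matrix n n ℂ} {B : Matrix m m ℂ} (hA : A.PosSemidef) (hB : B.PosSemidef) :
    (A ⊗ₖ B).PosSemidef := by
  exact Matrix.PosSemidef.kronecker hA hB

/-- Partial transposition as an `ℝ`-linear map. -/
def ptL (m₁ m₂ : ℕ) : Matrix (Fin m₁ × Fin m₂) (Fin m₁ × Fin m₂) ℂ →ₗ[ℝ]
    Matrix (Fin m₁ × Fin m₂) (Fin m₁ × Fin m₂) ℂ where
  toFun := pt₂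
  map_add' := fun _ _ => rfl
  map_smul' := fun _ _ => rfl

theorem sep_implies_ppt {m₁ m₂ : ℕ} (ρ : Matrix (Fin m₁ × Fin m₂) (Fin m₁ × Fin m₂) ℂ)
    (h : IsSepState ρ) : (pt₂ ρ).PosSemidef := by
  set S₀ := {σ : Matrix (Fin m₁ × Fin m₂) (Fin m₁ × Fin m₂) ℂ |
      ∃ (A : Matrix (Fin m₁) (Fin m₁) ℂ) (B : Matrix (Fin m₂) (Fin m₂) ℂ),
        IsState A ∧ IsState B ∧ σ = A ⊗ₖ B} with hS₀
  have hcont : Continuous (ptL m₁ m₂) := (ptL m₁ m₂).continuous_of_finiteDimensional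
  have h1 : pt₂ ρ ∈ (ptL m₁ m₂) '' (closure (convexHull ℝ S₀)) := ⟨ρ, h, rfl⟩
  have h2 : (ptL m₁ m₂) '' (closure (convexHull ℝ S₀)) ⊆
      closure ((ptL m₁ m₂) '' (convexHull ℝ S₀)) :=
    image_closure_subset_closure_image hcont
  rw [(ptL m₁ m₂).image_convexHull] at h2
  have himg : (ptL m₁ m₂) '' S₀ ⊆ {M | M.PosSemidef} := by
    rintro _ ⟨σ, ⟨A, B, hA, hB, rfl⟩, rfl⟩
    have : (ptL m₁ m₂) (A ⊗ₖ B) = A ⊗ₖ Bᵀ := rfl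
    rw [this]
    exact PosSemidef.kron hA.1 hB.1.transpose
  have h3 : closure (convexHull ℝ ((ptL m₁ m₂) '' S₀)) ⊆ {M | M.PosSemidef} :=
    closure_minimal (convexHull_min himg my_convex_psd) my_isClosed_psd
  exact h3 (h2 h1)

theorem quad_form (m₁ m₂ : ℕ) (Ψ : Fin m₁ × Fin m₂ → ℂ) (i j : Fin m₁) :
    star (fun p : Fin m₁ × Fin m₂ =>
        (if p.1 = j then star (Ψ (i, p.2)) else 0) -
        (if p.1 = i then star (Ψ (j, p.2)) else 0)) ⬝ᵥ
      (pt₂ (proj Ψ)) *ᵥ (fun p : Fin m₁ × Fin m₂ =>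
        (if p.1 = j then star (Ψ (i, p.2)) else 0) -
        (if p.1 = i then star (Ψ (j, p.2)) else 0)) =
    - ∑ μ, ∑ ν, (Ψ (i,μ) * Ψ (j,ν) - Ψ (j,μ) * Ψ (i,ν)) *
        star (Ψ (i,μ) * Ψ (j,ν) - Ψ (j,μ) * Ψ (i,ν)) := by
  set x : Fin m₁ × Fin m₂ → ℂ := fun p =>
    (if p.1 = j then star (Ψ (i, p.2)) else 0) -
    (if p.1 = i then star (Ψ (j, p.2)) else 0) with hx
  have key₁ : ∀ μ ν, (∑ k, star (x (k,μ)) * Ψ (k,ν)) =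
      Ψ (i,μ) * Ψ (j,ν) - Ψ (j,μ) * Ψ (i,ν) := by
    intro μ ν
    simp [hx, sub_mul, ite_mul, Finset.sum_sub_distrib, Finset.sum_ite_eq',
      apply_ite (starRingEnd ℂ)]
  have key₂ : ∀ μ ν, (∑ l, star (Ψ (l,μ)) * x (l,ν)) =
      - star (Ψ (i,μ) * Ψ (j,ν) - Ψ (j,μ) * Ψ (i,ν)) := by
    intro μ ν
    simp only [hx, mul_sub, mul_ite, mul_zero, Finset.sum_sub_distrib,
      Finset.sum_ite_eq', Finset.mem_univ, if_true, Pi.star_apply, star_sub, star_mul',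
      _root_.map_mul, _root_.map_sub]
    ring
  calc star x ⬝ᵥ (pt₂ (proj Ψ)) *ᵥ x
      = ∑ k, ∑ μ, ∑ l, ∑ ν, star (x (k,μ)) *
          (Ψ (k,ν) * star (Ψ (l,μ)) * x (l,ν)) := by
        simp only [dotProduct, Matrix.mulVec, Fintype.sum_prod_type,
          Pi.star_apply, pt₂, proj, Finset.mul_sum]
    _ = ∑ μ, ∑ k, ∑ l, ∑ ν, star (x (k,μ)) *
          (Ψ (k,ν) * star (Ψ (l,μ)) * x (l,ν)) := Finset.sum_comm
    _ = ∑ μ, ∑ ν, ∑ k, ∑ l, star (x (k,μ)) *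
          (Ψ (k,ν) * star (Ψ (l,μ)) * x (l,ν)) := by
        refine Finset.sum_congr rfl fun μ _ => ?_
        rw [show (∑ k, ∑ l, ∑ ν, star (x (k,μ)) *
            (Ψ (k,ν) * star (Ψ (l,μ)) * x (l,ν))) =
            ∑ k, ∑ ν, ∑ l, star (x (k,μ)) *
            (Ψ (k,ν) * star (Ψ (l,μ)) * x (l,ν)) from
          Finset.sum_congr rfl fun k _ => Finset.sum_comm]
        exact Finset.sum_comm
    _ = ∑ μ, ∑ ν, (∑ k, star (x (k,μ)) * Ψ (k,ν)) *
          (∑ l, star (Ψ (l,μ)) * x (l,ν)) := by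
        refine Finset.sum_congr rfl fun μ _ => Finset.sum_congr rfl fun ν _ => ?_
        rw [Finset.sum_mul_sum]
        exact Finset.sum_congr rfl fun k _ => Finset.sum_congr rfl fun l _ => by ring
    _ = - ∑ μ, ∑ ν, (Ψ (i,μ) * Ψ (j,ν) - Ψ (j,μ) * Ψ (i,ν)) *
          star (Ψ (i,μ) * Ψ (j,ν) - Ψ (j,μ) * Ψ (i,ν)) := by
        rw [← Finset.sum_neg_distrib]
        refine Finset.sum_congr rfl fun μ _ => ?_
        rw [← Finset.sum_neg_distrib]
        refine Finset.sum_congr rfl fun ν _ => ?_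
        rw [key₁, key₂]
        ring

theorem ppt_implies_prod {m₁ m₂ : ℕ} (Ψ : Fin m₁ × Fin m₂ → ℂ)
    (hΨ : ∑ p, ‖Ψ p‖ ^ 2 = 1) (h : (pt₂ (proj Ψ)).PosSemidef) :
    ∃ (ψ : Fin m₁ → ℂ) (φ : Fin m₂ → ℂ), Ψ = tens ψ φ := by
  have minor : ∀ (i j : Fin m₁) (μ ν : Fin m₂),
      Ψ (i,μ) * Ψ (j,ν) = Ψ (j,μ) * Ψ (i,ν) := by
    intro i j μ ν
    have h1 := h.dotProduct_mulVec_nonneg (fun p : Fin m₁ × Fin m₂ =>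
        (if p.1 = j then star (Ψ (i, p.2)) else 0) -
        (if p.1 = i then star (Ψ (j, p.2)) else 0))
    rw [quad_form m₁ m₂ Ψ i j] at h1
    have hsum : (∑ μ, ∑ ν, (Ψ (i,μ) * Ψ (j,ν) - Ψ (j,μ) * Ψ (i,ν)) *
        star (Ψ (i,μ) * Ψ (j,ν) - Ψ (j,μ) * Ψ (i,ν))) =
        ((∑ μ, ∑ ν, Complex.normSq (Ψ (i,μ) * Ψ (j,ν) - Ψ (j,μ) * Ψ (i,ν)) : ℝ) : ℂ) := by
      push_cast
      refine Finset.sum_congr rfl fun μ _ => Finset.sum_congr rfl fun ν _ => ?_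
      rw [Complex.star_def, Complex.mul_conj]
    rw [hsum] at h1
    set r : ℝ := ∑ μ, ∑ ν, Complex.normSq (Ψ (i,μ) * Ψ (j,ν) - Ψ (j,μ) * Ψ (i,ν)) with hr
    have hrle : r ≤ 0 := by
      have := (Complex.le_def.mp h1).1
      simpa using this
    have hrge : 0 ≤ r :=
      Finset.sum_nonneg fun μ _ => Finset.sum_nonneg fun ν _ => Complex.normSq_nonneg _
    have hr0 : r = 0 := le_antisymm hrle hrge
    have hterm : Complex.normSq (Ψ (i,μ) * Ψ (j,ν) - Ψ (j,μ) * Ψ (i,ν)) = 0 := by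
      have := (Finset.sum_eq_zero_iff_of_nonneg (fun μ _ =>
        Finset.sum_nonneg fun ν _ => Complex.normSq_nonneg _)).mp hr0 μ (Finset.mem_univ μ)
      have := (Finset.sum_eq_zero_iff_of_nonneg (fun ν _ =>
        Complex.normSq_nonneg _)).mp this ν (Finset.mem_univ ν)
      exact this
    have := Complex.normSq_eq_zero.mp hterm
    linear_combination this
  have hne : ∃ p₀, Ψ p₀ ≠ 0 := by
    by_contra hc
    push_neg at hc
    simp only [hc, norm_zero, zero_pow, Finset.sum_const, smul_zero] at hΨ
    norm_num at hΨ
  obtain ⟨⟨i₀, μ₀⟩, hp₀⟩ := hne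
  refine ⟨fun i => Ψ (i, μ₀), fun μ => Ψ (i₀, μ) / Ψ (i₀, μ₀), ?_⟩
  funext ⟨i, μ⟩
  have := minor i i₀ μ₀ μ
  simp only [tens]
  field_simp
  linear_combination -this

theorem prod_implies_sep {m₁ m₂ : ℕ} (Ψ : Fin m₁ × Fin m₂ → ℂ)
    (hΨ : ∑ p, ‖Ψ p‖ ^ 2 = 1) (ψ : Fin m₁ → ℂ) (φ : Fin m₂ → ℂ)
    (hp : Ψ = tens ψ φ) : IsSepState (proj Ψ) := by
  set s : ℝ := ∑ i, ‖ψ i‖ ^ 2 with hs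
  set t : ℝ := ∑ μ, ‖φ μ‖ ^ 2 with ht
  have hst : s * t = 1 := by
    rw [← hΨ, hp]
    rw [Fintype.sum_prod_type]
    rw [hs, ht, Finset.sum_mul_sum]
    refine Finset.sum_congr rfl fun i _ => Finset.sum_congr rfl fun μ _ => ?_
    simp [tens, norm_mul, mul_pow]
  have hs0 : 0 ≤ s := Finset.sum_nonneg fun i _ => by positivity
  have ht0 : 0 ≤ t := Finset.sum_nonneg fun i _ => by positivity
  set ψ' : Fin m₁ → ℂ := fun i => (Real.sqrt t : ℂ) * ψ i with hψ'
  set φ' : Fin m₂ → ℂ := fun μ => (Real.sqrt s : ℂ) * φ μ with hφ'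
  have htr : ∀ {n : Type} [Fintype n] (v : n → ℂ), (proj v).trace =
      ((∑ k, ‖v k‖ ^ 2 : ℝ) : ℂ) := by
    intro n _ v
    push_cast
    rw [Matrix.trace]
    refine Finset.sum_congr rfl fun k _ => ?_
    rw [Matrix.diag]
    show v k * star (v k) = _
    rw [Complex.star_def, Complex.mul_conj]
    norm_cast
    rw [Complex.normSq_eq_norm_sq]
  have hts : ((Real.sqrt t : ℂ)) * star ((Real.sqrt t : ℂ)) = (t:ℂ) := by
    rw [Complex.star_def, Complex.conj_ofReal]
    norm_cast
    exact Real.mul_self_sqrt ht0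
  have hss : ((Real.sqrt s : ℂ)) * star ((Real.sqrt s : ℂ)) = (s:ℂ) := by
    rw [Complex.star_def, Complex.conj_ofReal]
    norm_cast
    exact Real.mul_self_sqrt hs0
  have hcast : ((t:ℂ)) * ((s:ℂ)) = 1 := by
    rw [mul_comm]
    exact_mod_cast congrArg (fun r : ℝ => (r : ℂ)) hst
  have hnormψ : ∀ i, ‖ψ' i‖ ^ 2 = t * ‖ψ i‖ ^ 2 := by
    intro i
    rw [hψ']
    simp only [norm_mul, mul_pow, Complex.norm_real]
    rw [Real.norm_eq_abs, sq_abs, Real.sq_sqrt ht0]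
  have hnormφ : ∀ μ, ‖φ' μ‖ ^ 2 = s * ‖φ μ‖ ^ 2 := by
    intro μ
    rw [hφ']
    simp only [norm_mul, mul_pow, Complex.norm_real]
    rw [Real.norm_eq_abs, sq_abs, Real.sq_sqrt hs0]
  have hA : IsState (proj ψ') := by
    refine ⟨proj_psd _, ?_⟩
    rw [htr]
    have : ∑ i, ‖ψ' i‖ ^ 2 = t * s := by
      rw [show (∑ i, ‖ψ' i‖ ^ 2) = ∑ i, t * ‖ψ i‖ ^ 2 from
        Finset.sum_congr rfl fun i _ => hnormψ i, ← Finset.mul_sum, ← hs]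
    rw [this, mul_comm t s, hst]
    norm_num
  have hB : IsState (proj φ') := by
    refine ⟨proj_psd _, ?_⟩
    rw [htr]
    have : ∑ μ, ‖φ' μ‖ ^ 2 = s * t := by
      rw [show (∑ μ, ‖φ' μ‖ ^ 2) = ∑ μ, s * ‖φ μ‖ ^ 2 from
        Finset.sum_congr rfl fun μ _ => hnormφ μ, ← Finset.mul_sum, ← ht]
    rw [this, hst]
    norm_num
  have hkey : proj Ψ = (proj ψ') ⊗ₖ (proj φ') := by
    ext ⟨i, μ⟩ ⟨j, ν⟩
    show Ψ (i,μ) * star (Ψ (j,ν)) = (ψ' i * star (ψ' j)) * (φ' μ * star (φ' ν))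
    rw [hp]
    simp only [tens, hψ', hφ', star_mul']
    have hone : ((Real.sqrt t : ℂ)) * star ((Real.sqrt t : ℂ)) *
        (((Real.sqrt s : ℂ)) * star ((Real.sqrt s : ℂ))) = 1 := by
      rw [hts, hss, hcast]
    linear_combination (-(ψ i * star (ψ j) * φ μ * star (φ ν))) * hone
  rw [hkey]
  exact subset_closure (subset_convexHull ℝ _ ⟨proj ψ', proj φ', hA, hB, rfl⟩)

/-- For a pure state `P_Ψ` on `ℂ^{m₁} ⊗ ℂ^{m₂}`: separability
of `P_Ψ` is equivalent to positive semidefiniteness of its partial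
transposition, and both are equivalent to `Ψ` being a product vector. -/
theorem pure_state_separable_iff (m₁ m₂ : ℕ) (Ψ : Fin m₁ × Fin m₂ → ℂ)
    (hΨ : ∑ p, ‖Ψ p‖ ^ 2 = 1) :
    (IsSepState (proj Ψ) ↔ (pt₂ (proj Ψ)).PosSemidef) ∧
    (IsSepState (proj Ψ) ↔ ∃ (ψ : Fin m₁ → ℂ) (φ : Fin m₂ → ℂ), Ψ = tens ψ φ) := by
  have hsp : IsSepState (proj Ψ) → (pt₂ (proj Ψ)).PosSemidef := sep_implies_ppt _
  have hpp : (pt₂ (proj Ψ)).PosSemidef → ∃ ψ φ, Ψ = tens ψ φ := fun h =>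
    ppt_implies_prod Ψ hΨ h
  have hps : (∃ ψ φ, Ψ = tens ψ φ) → IsSepState (proj Ψ) := fun ⟨ψ, φ, h⟩ =>
    prod_implies_sep Ψ hΨ ψ φ h
  exact ⟨⟨hsp, fun h => hps (hpp h)⟩, ⟨fun h => hpp (hsp h), hps⟩⟩
end
end
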